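/- arXiv:1605.03319 — 7 statements merged into one kernel-verified Lean document; each statement's English description precedes it below -/
import Mathlib

section
/- The number of binary necklaces of length n containing exactly l ones equals (1/n) · Σ_{d | gcd(l,n)} φ(d) · C(n/d, l/d), where φ is Euler's totient function and C denotes a binomial coefficient. Formally: n divides Σ_{d | gcd(l,n)} φ(d) · C(n/d, l/d), and this sum divided by n counts the orbits of the cyclic group Z/nZ acting by rotation on binary strings of length n with exactly l ones. -/
/-- Two binary strings of length `n` are rotation-equivalent. -/
def necklaceRel (n : ℕ) (f g : Fin n → Bool) : Prop :=
  ∃ k : ℕ, g = f ∘ ⇑((finRotate n) ^ k)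

/-- Number of ones in a binary string. -/
def onesCount {n : ℕ} (f : Fin n → Bool) : ℕ :=
  (Finset.univ.filter (fun i => f i = true)).card

/-- Restriction of the rotation relation to strings with exactly `l` ones. -/
def necklaceRelOnes (n l : ℕ) (f g : {f : Fin n → Bool // onesCount f = l}) : Prop :=
  necklaceRel n f.1 g.1

open Finset AddAction
open scoped Fin.NatCast Fin.IntCast Fin.CommRing

section Aux

lemma periodic_nsmul' {M : Type*} [AddCommMonoid M] (f : M → Bool) (c : M)
    (h : ∀ i, f (i + c) = f i) : ∀ (t : ℕ) (i : M), f (i + t • c) = f i := by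
  intro t
  induction t with
  | zero => intro i; simp
  | succ t ih =>
    intro i
    rw [succ_nsmul, ← add_assoc, h, ih]

lemma card_gcd_filter (n e : ℕ) (hn : n ≠ 0) (he : e ∣ n) :
    ((Finset.range n).filter (fun a => Nat.gcd a n = e)).card = Nat.totient (n / e) := by
  have he0 : 0 < e := Nat.pos_of_ne_zero fun h => hn (by simpa [h] using he)
  rw [Nat.totient]
  apply Finset.card_bij (fun a _ => a / e)
  · intro a ha
    simp only [Finset.mem_filter, Finset.mem_range] at ha ⊢
    obtain ⟨ha1, ha2⟩ := ha
    refine ⟨Nat.div_lt_div_of_lt_of_dvd he ha1, ?_⟩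
    have h1 : Nat.gcd n a = e := by rw [Nat.gcd_comm]; exact ha2
    have := Nat.coprime_div_gcd_div_gcd (m := n) (n := a) (by rw [h1]; exact he0)
    rwa [h1] at this
  · intro a ha b hb hab
    simp only [Finset.mem_filter, Finset.mem_range] at ha hb
    have hea : e ∣ a := ha.2 ▸ Nat.gcd_dvd_left a n
    have heb : e ∣ b := hb.2 ▸ Nat.gcd_dvd_left b n
    rw [← Nat.div_mul_cancel hea, ← Nat.div_mul_cancel heb, hab]
  · intro b hb
    simp only [Finset.mem_filter, Finset.mem_range] at hb
    obtain ⟨hb1, hb2⟩ := hb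
    refine ⟨b * e, ?_, Nat.mul_div_cancel b he0⟩
    simp only [Finset.mem_filter, Finset.mem_range]
    constructor
    · calc b * e < (b + 1) * e := by
            exact Nat.mul_lt_mul_of_lt_of_le (Nat.lt_succ_self b) le_rfl he0
        _ ≤ (n / e) * e := Nat.mul_le_mul_right e hb1
        _ = n := Nat.div_mul_cancel he
    · conv_lhs => rw [show n = (n / e) * e from (Nat.div_mul_cancel he).symm]
      rw [Nat.gcd_mul_right, Nat.Coprime.gcd_eq_one (Nat.Coprime.symm hb2), one_mul]
end Aux

section Necklace

variable (m l : ℕ)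

/-- The subtype of binary strings with `l` ones. -/
abbrev NX := {f : Fin (m + 1) → Bool // onesCount f = l}

lemma onesCount_comp_add (f : Fin (m + 1) → Bool) (a : Fin (m + 1)) :
    onesCount (fun i => f (i + a)) = onesCount f := by
  unfold onesCount
  apply Finset.card_bij (fun x _ => x + a)
  · intro x hx
    simp only [Finset.mem_filter, Finset.mem_univ, true_and] at hx ⊢
    exact hx
  · intro x hx y hy hxy
    exact add_right_cancel hxy
  · intro b hb
    simp only [Finset.mem_filter, Finset.mem_univ, true_and] at hb ⊢
    exact ⟨b - a, by simpa using hb, by simp⟩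

instance necklaceAddAction : AddAction (Fin (m + 1)) (NX m l) where
  vadd a x := ⟨fun i => x.1 (i + a), by rw [onesCount_comp_add]; exact x.2⟩
  zero_vadd x := Subtype.ext (funext fun i => by show x.1 (i + 0) = x.1 i; rw [add_zero])
  add_vadd a b x := Subtype.ext (funext fun i => by
    show x.1 (i + (a + b)) = x.1 ((i + a) + b)
    rw [add_assoc])

lemma vadd_def (a : Fin (m + 1)) (x : NX m l) (i : Fin (m + 1)) :
    (a +ᵥ x).1 i = x.1 (i + a) := rfl

lemma finRotate_pow_apply (k : ℕ) (i : Fin (m + 1)) :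
    ((finRotate (m + 1)) ^ k) i = i + (k : Fin (m + 1)) := by
  induction k generalizing i with
  | zero => simp
  | succ k ih =>
    rw [pow_succ, Equiv.Perm.mul_apply, finRotate_succ_apply, ih (i + 1), Nat.cast_succ]
    ring

lemma necklaceRelOnes_iff (x y : NX m l) :
    necklaceRelOnes (m + 1) l x y ↔ ∃ a : Fin (m + 1), a +ᵥ x = y := by
  constructor
  · rintro ⟨k, hk⟩
    refine ⟨(k : Fin (m + 1)), Subtype.ext (funext fun i => ?_)⟩
    rw [_root_.vadd_def]
    rw [show (y : Fin (m+1) → Bool) = x.1 ∘ ⇑((finRotate (m+1)) ^ k) from hk]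
    simp only [Function.comp_apply, finRotate_pow_apply]
  · rintro ⟨a, ha⟩
    refine ⟨a.val, funext fun i => ?_⟩
    rw [← ha]
    simp only [Function.comp_apply, finRotate_pow_apply, _root_.vadd_def, Fin.cast_val_eq_self]

lemma necklaceRel_eq_orbitRel :
    necklaceRelOnes (m + 1) l = (AddAction.orbitRel (Fin (m + 1)) (NX m l)).r := by
  have hsymm : ∀ x y : NX m l, (∃ a : Fin (m+1), a +ᵥ x = y) → ∃ a : Fin (m+1), a +ᵥ y = x := by
    rintro x y ⟨a, rfl⟩
    exact ⟨-a, by rw [← add_vadd, neg_add_cancel, zero_vadd]⟩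
  funext x y
  apply propext
  rw [necklaceRelOnes_iff]
  show _ ↔ x ∈ AddAction.orbit (Fin (m + 1)) y
  rw [AddAction.mem_orbit_iff]
  exact ⟨fun h => hsymm x y h, fun h => hsymm y x h⟩

section Periodic

variable (d : ℕ)

/-- decompose `Fin (m+1)` as pairs (residue mod d, quotient). -/
def modDivEquiv (hd : d ∣ m + 1) (hd0 : 0 < d) :
    Fin (m + 1) ≃ Fin d × Fin ((m + 1) / d) where
  toFun i := (⟨i.val % d, Nat.mod_lt _ hd0⟩,
    ⟨i.val / d, Nat.div_lt_div_of_lt_of_dvd hd i.isLt⟩)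
  invFun p := ((p.1.val + d * p.2.val : ℕ) : Fin (m + 1))
  left_inv i := by
    show ((i.val % d + d * (i.val / d) : ℕ) : Fin (m + 1)) = i
    rw [Nat.mod_add_div, Fin.cast_val_eq_self]
  right_inv p := by
    have hlt : p.1.val + d * p.2.val < m + 1 := by
      calc p.1.val + d * p.2.val < d + d * p.2.val := by
            exact Nat.add_lt_add_right p.1.isLt _
        _ = d * (p.2.val + 1) := by ring
        _ ≤ d * ((m + 1) / d) := Nat.mul_le_mul_left d p.2.isLt
        _ = m + 1 := Nat.mul_div_cancel' hd
    have hv : ((p.1.val + d * p.2.val : ℕ) : Fin (m + 1)).val = p.1.val + d * p.2.val := by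
      rw [Fin.val_natCast, Nat.mod_eq_of_lt hlt]
    ext
    · simp only [hv, Nat.add_mul_mod_self_left, Nat.mod_eq_of_lt p.1.isLt]
    · simp only [hv]
      rw [Nat.add_mul_div_left _ _ hd0, Nat.div_eq_of_lt p.1.isLt, zero_add]

lemma key_period (hd0 : 0 < d) (f : Fin (m + 1) → Bool)
    (hper : ∀ i, f (i + (d : Fin (m + 1))) = f i) (i : Fin (m + 1)) :
    f i = f ((i.val % d : ℕ) : Fin (m + 1)) := by
  have h1 : ((i.val % d : ℕ) : Fin (m + 1)) + (i.val / d) • (d : Fin (m + 1)) = i := by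
    rw [nsmul_eq_mul, ← Nat.cast_mul, ← Nat.cast_add, Nat.mod_add_div', Fin.cast_val_eq_self]
  conv_lhs => rw [← h1]
  exact periodic_nsmul' f _ hper _ _

lemma onesCount_periodic (hd : d ∣ m + 1) (hd0 : 0 < d) (f : Fin (m + 1) → Bool)
    (hper : ∀ i, f (i + (d : Fin (m + 1))) = f i) :
    onesCount f = ((m + 1) / d) * onesCount (fun j : Fin d => f ((j.val : ℕ) : Fin (m + 1))) := by
  classical
  unfold onesCount
  rw [← Fintype.card_subtype, ← Fintype.card_subtype]
  set g : Fin d → Bool := fun j => f ((j.val : ℕ) : Fin (m + 1)) with hg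
  have key : ∀ i : Fin (m + 1), f i = g ⟨i.val % d, Nat.mod_lt _ hd0⟩ := fun i =>
    key_period m d hd0 f hper i
  have e1 : {i : Fin (m + 1) // f i = true} ≃
      {p : Fin d × Fin ((m + 1) / d) // g p.1 = true} := by
    refine ((modDivEquiv m d hd hd0).subtypeEquiv fun i => ?_)
    rw [key i]
    exact Iff.rfl
  have e2 : {p : Fin d × Fin ((m + 1) / d) // g p.1 = true} ≃
      {j : Fin d // g j = true} × Fin ((m + 1) / d) :=
    { toFun := fun x => (⟨x.1.1, x.2⟩, x.1.2)
      invFun := fun x => ⟨(x.1.1, x.2), x.1.2⟩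
      left_inv := fun _ => rfl
      right_inv := fun _ => rfl }
  rw [Fintype.card_congr (e1.trans e2), Fintype.card_prod, Fintype.card_fin, mul_comm]

/-- binary strings ≃ finsets -/
def boolFunEquivFinset (α : Type*) [Fintype α] [DecidableEq α] :
    (α → Bool) ≃ Finset α where
  toFun f := Finset.univ.filter (fun i => f i = true)
  invFun s := fun a => decide (a ∈ s)
  left_inv f := by
    funext a
    simp [Finset.mem_filter]
  right_inv s := by
    ext a
    simp [Finset.mem_filter]

lemma card_ones_eq_choose (d l' : ℕ) :
    Nat.card {g : Fin d → Bool // onesCount g = l'} = Nat.choose d l' := by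
  classical
  have e : {g : Fin d → Bool // onesCount g = l'} ≃ {s : Finset (Fin d) // s.card = l'} :=
    (boolFunEquivFinset (Fin d)).subtypeEquiv fun g => by
      unfold onesCount boolFunEquivFinset
      simp
  rw [Nat.card_congr e, Nat.card_eq_fintype_card, Fintype.card_finset_len, Fintype.card_fin]

lemma card_periodic_ones (hd : d ∣ m + 1) (hd0 : 0 < d) :
    Nat.card {f : Fin (m + 1) → Bool //
        (∀ i, f (i + (d : Fin (m + 1))) = f i) ∧ onesCount f = l} =
      if ((m + 1) / d) ∣ l then Nat.choose d (l / ((m + 1) / d)) else 0 := by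
  classical
  set q := (m + 1) / d with hq
  have hq0 : 0 < q := Nat.div_pos (Nat.le_of_dvd (Nat.succ_pos m) hd) hd0
  -- the equivalence with functions on Fin d
  have hmod : ∀ i : Fin (m + 1), (i + (d : Fin (m + 1))).val % d = i.val % d := by
    intro i
    have h0 : (d % (m + 1)) % d = 0 := by
      rcases Nat.lt_or_ge d (m + 1) with h | h
      · rw [Nat.mod_eq_of_lt h, Nat.mod_self]
      · have : d = m + 1 := le_antisymm (Nat.le_of_dvd (Nat.succ_pos m) hd) h
        simp [this]
    rw [Fin.add_def]
    simp only [Fin.val_natCast]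
    rw [Nat.mod_mod_of_dvd _ hd, Nat.add_mod, h0, add_zero, Nat.mod_mod_of_dvd _ (dvd_refl d)]
  have hcastval : ∀ j : Fin d, ((j.val : ℕ) : Fin (m + 1)).val % d = j.val := by
    intro j
    rw [Fin.val_natCast,
      Nat.mod_eq_of_lt (lt_of_lt_of_le j.isLt (Nat.le_of_dvd (Nat.succ_pos m) hd)),
      Nat.mod_eq_of_lt j.isLt]
  have E : {f : Fin (m + 1) → Bool //
      (∀ i, f (i + (d : Fin (m + 1))) = f i) ∧ onesCount f = l} ≃
      {g : Fin d → Bool // q * onesCount g = l} := by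
    refine
      { toFun := fun x => ⟨fun j => x.1 ((j.val : ℕ) : Fin (m + 1)), ?_⟩
        invFun := fun y => ⟨fun i => y.1 ⟨i.val % d, Nat.mod_lt _ hd0⟩, ?_, ?_⟩
        left_inv := ?_
        right_inv := ?_ }
    · rw [← onesCount_periodic m d hd hd0 x.1 x.2.1]
      exact x.2.2
    · intro i
      apply congrArg
      exact Fin.ext (hmod i)
    · -- ones count of the pulled-back function
      set f : Fin (m + 1) → Bool := fun i => y.1 ⟨i.val % d, Nat.mod_lt _ hd0⟩ with hf
      have hper : ∀ i, f (i + (d : Fin (m + 1))) = f i := by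
        intro i
        show y.1 ⟨(i + (d : Fin (m + 1))).val % d, Nat.mod_lt _ hd0⟩ =
          y.1 ⟨i.val % d, Nat.mod_lt _ hd0⟩
        exact congrArg y.1 (Fin.ext (hmod i))
      have hgf : (fun j : Fin d => f ((j.val : ℕ) : Fin (m + 1))) = y.1 := by
        funext j
        exact congrArg y.1 (Fin.ext (hcastval j))
      rw [onesCount_periodic m d hd hd0 f hper, hgf]
      exact y.2
    · rintro ⟨f, hper, hones⟩
      apply Subtype.ext
      funext i
      exact (key_period m d hd0 f hper i).symm
    · rintro ⟨g, hg⟩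
      apply Subtype.ext
      funext j
      exact congrArg g (Fin.ext (hcastval j))
  rw [Nat.card_congr E]
  by_cases hdl : q ∣ l
  · rw [if_pos hdl]
    obtain ⟨l', rfl⟩ := hdl
    have e2 : {g : Fin d → Bool // q * onesCount g = q * l'} ≃
        {g : Fin d → Bool // onesCount g = l'} :=
      Equiv.subtypeEquivRight fun g => by
        constructor
        · exact fun h => Nat.eq_of_mul_eq_mul_left hq0 h
        · exact fun h => by rw [h]
    rw [Nat.card_congr e2, Nat.mul_div_cancel_left _ hq0, card_ones_eq_choose]
  · rw [if_neg hdl]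
    have : IsEmpty {g : Fin d → Bool // q * onesCount g = l} :=
      ⟨fun x => hdl ⟨onesCount x.1, x.2.symm⟩⟩
    exact Nat.card_of_isEmpty

end Periodic

lemma period_iff_gcd (a : Fin (m + 1)) (f : Fin (m + 1) → Bool) :
    (∀ i, f (i + a) = f i) ↔
      (∀ i, f (i + ((Nat.gcd a.val (m + 1) : ℕ) : Fin (m + 1))) = f i) := by
  set d := Nat.gcd a.val (m + 1) with hdd
  constructor
  · intro h i
    have hbez : ((d : ℤ) : ℤ) = (a.val : ℤ) * Nat.gcdA a.val (m + 1) +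
        ((m + 1 : ℕ) : ℤ) * Nat.gcdB a.val (m + 1) := Nat.gcd_eq_gcd_ab a.val (m + 1)
    have hcast : (d : Fin (m + 1)) = a * ((Nat.gcdA a.val (m + 1) : ℤ) : Fin (m + 1)) := by
      have := congrArg (fun z : ℤ => (z : Fin (m + 1))) hbez
      push_cast at this
      simpa [Fin.cast_val_eq_self] using this
    set c : Fin (m + 1) := ((Nat.gcdA a.val (m + 1) : ℤ) : Fin (m + 1)) with hc
    have : (d : Fin (m + 1)) = c.val • a := by
      rw [nsmul_eq_mul, Fin.cast_val_eq_self, hcast, mul_comm]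
    rw [this]
    exact periodic_nsmul' f a h c.val i
  · intro h i
    obtain ⟨t, ht⟩ := Nat.gcd_dvd_left a.val (m + 1)
    have : a = t • ((d : ℕ) : Fin (m + 1)) := by
      rw [nsmul_eq_mul, ← Fin.cast_val_eq_self a, ht]
      push_cast
      ring
    rw [this]
    exact periodic_nsmul' f _ h t i

lemma card_fixedBy (a : Fin (m + 1)) :
    Nat.card (fixedBy (NX m l) a) =
      if ((m + 1) / Nat.gcd a.val (m + 1)) ∣ l then
        Nat.choose (Nat.gcd a.val (m + 1)) (l / ((m + 1) / Nat.gcd a.val (m + 1)))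
      else 0 := by
  classical
  set d := Nat.gcd a.val (m + 1) with hdd
  have hd : d ∣ m + 1 := Nat.gcd_dvd_right _ _
  have hd0 : 0 < d := Nat.gcd_pos_of_pos_right _ (Nat.succ_pos m)
  have e : fixedBy (NX m l) a ≃
      {f : Fin (m + 1) → Bool //
        (∀ i, f (i + ((d : ℕ) : Fin (m + 1))) = f i) ∧ onesCount f = l} := by
    refine
      { toFun := fun x => ⟨x.1.1, ?_, x.1.2⟩
        invFun := fun y => ⟨⟨y.1, y.2.2⟩, ?_⟩
        left_inv := fun x => Subtype.ext (Subtype.ext rfl)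
        right_inv := fun y => Subtype.ext rfl }
    · have hx : a +ᵥ x.1 = x.1 := x.2
      have hper : ∀ i, x.1.1 (i + a) = x.1.1 i := by
        intro i
        conv_rhs => rw [← hx]
        rfl
      exact (period_iff_gcd m a x.1.1).mp hper
    · show a +ᵥ (⟨y.1, y.2.2⟩ : NX m l) = ⟨y.1, y.2.2⟩
      apply Subtype.ext
      funext i
      exact (period_iff_gcd m a y.1).mpr y.2.1 i
  rw [Nat.card_congr e, card_periodic_ones m l d hd hd0]

lemma sum_eval :
    (∑ a : Fin (m + 1), if ((m + 1) / Nat.gcd a.val (m + 1)) ∣ l then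
        Nat.choose (Nat.gcd a.val (m + 1)) (l / ((m + 1) / Nat.gcd a.val (m + 1)))
      else 0) =
    ∑ d ∈ (Nat.gcd l (m + 1)).divisors, d.totient * Nat.choose ((m + 1) / d) (l / d) := by
  classical
  set F : ℕ → ℕ := fun e => if ((m + 1) / e) ∣ l then Nat.choose e (l / ((m + 1) / e)) else 0
    with hF
  have h1 : (∑ a : Fin (m + 1), F (Nat.gcd a.val (m + 1))) =
      ∑ a ∈ Finset.range (m + 1), F (Nat.gcd a (m + 1)) :=
    Fin.sum_univ_eq_sum_range (fun a => F (Nat.gcd a (m + 1))) (m + 1)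
  have hmaps : ∀ a ∈ Finset.range (m + 1), Nat.gcd a (m + 1) ∈ (m + 1).divisors := by
    intro a _
    exact Nat.mem_divisors.mpr ⟨Nat.gcd_dvd_right _ _, Nat.succ_ne_zero m⟩
  have h2 : ∑ a ∈ Finset.range (m + 1), F (Nat.gcd a (m + 1)) =
      ∑ e ∈ (m + 1).divisors, Nat.totient ((m + 1) / e) * F e := by
    rw [← Finset.sum_fiberwise_of_maps_to hmaps (fun a => F (Nat.gcd a (m + 1)))]
    apply Finset.sum_congr rfl
    intro e he
    have : ∑ a ∈ (Finset.range (m + 1)).filter (fun a => Nat.gcd a (m + 1) = e),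
        F (Nat.gcd a (m + 1)) =
        ∑ _a ∈ (Finset.range (m + 1)).filter (fun a => Nat.gcd a (m + 1) = e), F e := by
      apply Finset.sum_congr rfl
      intro a ha
      rw [(Finset.mem_filter.mp ha).2]
    rw [this, Finset.sum_const, smul_eq_mul,
      card_gcd_filter (m + 1) e (Nat.succ_ne_zero m) (Nat.mem_divisors.mp he).1]
  have h3 : ∑ e ∈ (m + 1).divisors, Nat.totient ((m + 1) / e) * F e =
      ∑ e ∈ (m + 1).divisors, (fun x => Nat.totient x * F ((m + 1) / x)) ((m + 1) / e) := by
    apply Finset.sum_congr rfl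
    intro e he
    simp only
    rw [Nat.div_div_self (Nat.mem_divisors.mp he).1 (Nat.succ_ne_zero m)]
  have h4 : ∑ e ∈ (m + 1).divisors, (fun x => Nat.totient x * F ((m + 1) / x)) ((m + 1) / e) =
      ∑ d ∈ (m + 1).divisors, Nat.totient d * F ((m + 1) / d) :=
    Nat.sum_div_divisors (m + 1) (fun x => Nat.totient x * F ((m + 1) / x))
  have h5 : ∑ d ∈ (m + 1).divisors, Nat.totient d * F ((m + 1) / d) =
      ∑ d ∈ (m + 1).divisors, if d ∣ l then Nat.totient d * Nat.choose ((m + 1) / d) (l / d)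
        else 0 := by
    apply Finset.sum_congr rfl
    intro d hdm
    have hdvd : d ∣ m + 1 := (Nat.mem_divisors.mp hdm).1
    have hdd : (m + 1) / ((m + 1) / d) = d := Nat.div_div_self hdvd (Nat.succ_ne_zero m)
    rw [hF]
    simp only [hdd]
    split_ifs with h
    · rfl
    · rw [mul_zero]
  have h6 : ∑ d ∈ (m + 1).divisors,
        (if d ∣ l then Nat.totient d * Nat.choose ((m + 1) / d) (l / d) else 0) =
      ∑ d ∈ (Nat.gcd l (m + 1)).divisors, d.totient * Nat.choose ((m + 1) / d) (l / d) := by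
    rw [← Finset.sum_filter]
    have hset : (m + 1).divisors.filter (fun d => d ∣ l) = (Nat.gcd l (m + 1)).divisors := by
      ext x
      simp only [Finset.mem_filter, Nat.mem_divisors]
      constructor
      · rintro ⟨⟨h1, _⟩, h3⟩
        exact ⟨Nat.dvd_gcd h3 h1,
          fun h => (Nat.succ_ne_zero m) (Nat.eq_zero_of_gcd_eq_zero_right h)⟩
      · rintro ⟨h1, _⟩
        exact ⟨⟨h1.trans (Nat.gcd_dvd_right _ _), Nat.succ_ne_zero m⟩,
          h1.trans (Nat.gcd_dvd_left _ _)⟩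
    rw [hset]
  rw [h1, h2, h3, h4, h5, h6]

end Necklace

theorem necklace_count_with_l_ones (n l : ℕ) (hn : 1 ≤ n) (hl : l ≤ n) :
    n ∣ (∑ d ∈ (Nat.gcd l n).divisors, d.totient * Nat.choose (n / d) (l / d)) ∧
    Nat.card (Quot (necklaceRelOnes n l)) =
      (∑ d ∈ (Nat.gcd l n).divisors, d.totient * Nat.choose (n / d) (l / d)) / n := by
  classical
  obtain ⟨m, rfl⟩ : ∃ m, n = m + 1 := ⟨n - 1, by omega⟩
  haveI : ∀ a : Fin (m + 1), Fintype (fixedBy (NX m l) a) := fun _ => Fintype.ofFinite _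
  haveI : Fintype (Quotient (AddAction.orbitRel (Fin (m + 1)) (NX m l))) := Fintype.ofFinite _
  have hb := AddAction.sum_card_fixedBy_eq_card_orbits_mul_card_addGroup
    (Fin (m + 1)) (NX m l)
  rw [Fintype.card_fin] at hb
  have hS : (∑ d ∈ (Nat.gcd l (m + 1)).divisors,
      d.totient * Nat.choose ((m + 1) / d) (l / d)) =
      Fintype.card (Quotient (AddAction.orbitRel (Fin (m + 1)) (NX m l))) * (m + 1) := by
    rw [← hb, ← sum_eval m l]
    apply Finset.sum_congr rfl
    intro a _
    rw [← Nat.card_eq_fintype_card, card_fixedBy m l a]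
  have heq : Quot (necklaceRelOnes (m + 1) l) =
      Quotient (AddAction.orbitRel (Fin (m + 1)) (NX m l)) :=
    congrArg Quot (necklaceRel_eq_orbitRel m l)
  constructor
  · exact ⟨_, by rw [hS, mul_comm]⟩
  · rw [heq, Nat.card_eq_fintype_card, hS, Nat.mul_div_cancel _ (Nat.succ_pos m)]
end

section
/- For every positive integer n and every divisor l of interest, n divides the sum Σ_{d | gcd(l,n)} φ(d) · C(n/d, l/d); that is, the quantity N(n,l) = (1/n)·Σ_{d | gcd(l,n)} φ(d)·C(n/d, l/d) is a natural number. -/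
open Finset

attribute [local instance] Classical.propDecidable

namespace NecklaceAux

variable {n : ℕ} [NeZero n]

lemma mem_iff_add_mem {g : ZMod n} {s : Finset (ZMod n)}
    (hs : s.image (· + g) = s) (x : ZMod n) : x ∈ s ↔ x + g ∈ s := by
  constructor
  · intro hx; rw [← hs]; exact Finset.mem_image_of_mem _ hx
  · intro hx
    rw [← hs] at hx
    obtain ⟨y, hy, hxy⟩ := Finset.mem_image.mp hx
    have : y = x := add_right_cancel hxy
    rwa [← this]

lemma mem_iff_nsmul {g : ZMod n} {s : Finset (ZMod n)}
    (hs : s.image (· + g) = s) (k : ℕ) (x : ZMod n) : x ∈ s ↔ x + k • g ∈ s := by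
  induction k with
  | zero => simp
  | succ k ih =>
      rw [ih, succ_nsmul, ← add_assoc]
      exact mem_iff_add_mem hs _

lemma mem_iff_zsmul {g : ZMod n} {s : Finset (ZMod n)}
    (hs : s.image (· + g) = s) {h : ZMod n} (hh : h ∈ AddSubgroup.zmultiples g)
    (x : ZMod n) : x ∈ s ↔ x + h ∈ s := by
  rw [← mem_multiples_iff_mem_zmultiples] at hh
  obtain ⟨k, rfl⟩ := hh
  exact mem_iff_nsmul hs k x

lemma card_fiber (g : ZMod n) (q : ZMod n ⧸ AddSubgroup.zmultiples g) :
    (univ.filter (fun x : ZMod n => (QuotientAddGroup.mk x : ZMod n ⧸ AddSubgroup.zmultiples g) = q)).card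
      = addOrderOf g := by
  have e := QuotientAddGroup.preimageMkEquivAddSubgroupProdSet (AddSubgroup.zmultiples g)
    ({q} : Set (ZMod n ⧸ AddSubgroup.zmultiples g))
  have h1 : Nat.card ((QuotientAddGroup.mk : ZMod n → ZMod n ⧸ AddSubgroup.zmultiples g) ⁻¹' {q})
      = Nat.card (AddSubgroup.zmultiples g) * Nat.card ({q} : Set (ZMod n ⧸ AddSubgroup.zmultiples g)) := by
    rw [Nat.card_congr e, Nat.card_prod]
  have h2 : Nat.card ({q} : Set (ZMod n ⧸ AddSubgroup.zmultiples g)) = 1 := by simp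
  have h3 : Nat.card (AddSubgroup.zmultiples g) = addOrderOf g := Nat.card_zmultiples g
  rw [h2, h3, mul_one] at h1
  rw [← h1, Nat.card_eq_fintype_card]
  rw [Fintype.card_subtype]
  congr 1
  apply Finset.filter_congr
  intro x _
  simp [Set.mem_preimage]

lemma card_quotient (g : ZMod n) :
    Fintype.card (ZMod n ⧸ AddSubgroup.zmultiples g) = n / addOrderOf g := by
  have h := AddSubgroup.card_eq_card_quotient_mul_card_addSubgroup (AddSubgroup.zmultiples g)
  rw [Nat.card_zmultiples g, Nat.card_eq_fintype_card (α := ZMod n), ZMod.card,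
    Nat.card_eq_fintype_card] at h
  have hd : 0 < addOrderOf g := addOrderOf_pos g
  exact (Nat.div_eq_of_eq_mul_left hd h).symm

lemma card_fixed_sets (l : ℕ) (g : ZMod n) :
    ((univ : Finset (Finset (ZMod n))).filter
        (fun s => s.image (· + g) = s ∧ s.card = l)).card
      = if addOrderOf g ∣ l then (n / addOrderOf g).choose (l / addOrderOf g) else 0 := by
  set d := addOrderOf g with hdd
  have hd : 0 < d := addOrderOf_pos g
  set H := AddSubgroup.zmultiples g with hH
  set mk : ZMod n → ZMod n ⧸ H := QuotientAddGroup.mk with hmk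
  have key : ∀ s : Finset (ZMod n), s.image (· + g) = s →
      s.card = d * (s.image mk).card := by
    intro s hs
    rw [Finset.card_eq_sum_card_fiberwise (f := mk) (t := s.image mk)
      (fun x hx => Finset.mem_image_of_mem _ hx)]
    have hterm : ∀ q ∈ s.image mk, (s.filter (fun x => mk x = q)).card = d := by
      intro q hq
      have hfull : s.filter (fun x => mk x = q) = univ.filter (fun x => mk x = q) := by
        obtain ⟨y, hy, rfl⟩ := Finset.mem_image.mp hq
        ext x
        simp only [Finset.mem_filter, Finset.mem_univ, true_and, and_iff_right_iff_imp]
        intro hxq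
        have hmem : -y + x ∈ H := (QuotientAddGroup.eq (s := H)).mp hxq.symm
        have := (mem_iff_zsmul hs hmem y).mp hy
        rwa [add_neg_cancel_left] at this
      rw [hfull, card_fiber g q]
    rw [Finset.sum_congr rfl hterm, Finset.sum_const, smul_eq_mul, mul_comm]
  by_cases hdl : d ∣ l
  · rw [if_pos hdl]
    have hcardQ : Fintype.card (ZMod n ⧸ H) = n / d := card_quotient g
    rw [← hcardQ, ← Finset.card_univ,
      ← Finset.card_powersetCard (l / d) (univ : Finset (ZMod n ⧸ H))]
    apply Finset.card_bij' (i := fun s _ => s.image mk)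
      (j := fun t _ => univ.filter (fun x => mk x ∈ t))
    · -- maps to
      intro s hs
      rw [Finset.mem_filter] at hs
      obtain ⟨-, hfix, hcard⟩ := hs
      rw [Finset.mem_powersetCard]
      refine ⟨Finset.subset_univ _, ?_⟩
      have h1 := key s hfix
      rw [hcard] at h1
      rw [h1, Nat.mul_div_cancel_left _ hd]
    · -- reverse maps to
      intro t ht
      rw [Finset.mem_powersetCard] at ht
      obtain ⟨-, htcard⟩ := ht
      rw [Finset.mem_filter]
      refine ⟨Finset.mem_univ _, ?_, ?_⟩
      · ext x
        simp only [Finset.mem_image, Finset.mem_filter, Finset.mem_univ, true_and]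
        constructor
        · rintro ⟨y, hy, rfl⟩
          have heq : mk (y + g) = mk y := by
            rw [hmk, QuotientAddGroup.eq (s := H)]
            rw [show -(y + g) + y = -g by abel]
            exact neg_mem (AddSubgroup.mem_zmultiples g)
          rw [heq]; exact hy
        · intro hx
          refine ⟨x + -g, ?_, by abel⟩
          have heq : mk (x + -g) = mk x := by
            rw [hmk, QuotientAddGroup.eq (s := H)]
            rw [show -(x + -g) + x = g by abel]
            exact AddSubgroup.mem_zmultiples g
          rw [heq]; exact hx
      · rw [Finset.card_eq_sum_card_fiberwise (f := mk) (s := univ.filter (fun x => mk x ∈ t)) (t := t)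
          (fun x hx => (Finset.mem_filter.mp hx).2)]
        have hterm : ∀ q ∈ t,
            ((univ.filter (fun x => mk x ∈ t)).filter (fun x => mk x = q)).card = d := by
          intro q hq
          have heq : (univ.filter (fun x => mk x ∈ t)).filter (fun x => mk x = q)
              = univ.filter (fun x => mk x = q) := by
            ext x
            simp only [Finset.mem_filter, Finset.mem_univ, true_and]
            constructor
            · rintro ⟨-, h⟩; exact h
            · intro h; exact ⟨by rwa [h], h⟩
          rw [heq, card_fiber g q]
        rw [Finset.sum_congr rfl hterm, Finset.sum_const, smul_eq_mul, htcard,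
          Nat.div_mul_cancel hdl]
    · -- left inverse
      intro s hs
      rw [Finset.mem_filter] at hs
      obtain ⟨-, hfix, hcard⟩ := hs
      ext x
      simp only [Finset.mem_filter, Finset.mem_univ, true_and, Finset.mem_image]
      constructor
      · rintro ⟨y, hy, hxy⟩
        have hmem : -y + x ∈ H := (QuotientAddGroup.eq (s := H)).mp hxy
        have := (mem_iff_zsmul hfix hmem y).mp hy
        rwa [add_neg_cancel_left] at this
      · intro hx; exact ⟨x, hx, rfl⟩
    · -- right inverse
      intro t ht
      ext q
      simp only [Finset.mem_image, Finset.mem_filter, Finset.mem_univ, true_and]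
      constructor
      · rintro ⟨x, hx, rfl⟩; exact hx
      · intro hq
        exact ⟨Quotient.out q,
          by rwa [show mk (Quotient.out q) = q from QuotientAddGroup.out_eq' q],
          QuotientAddGroup.out_eq' q⟩
  · rw [if_neg hdl]
    rw [Finset.card_eq_zero, Finset.filter_eq_empty_iff]
    rintro s -
    rintro ⟨hfix, hcard⟩
    exact hdl ⟨(s.image mk).card, by rw [← hcard, key s hfix]⟩

instance necklaceAction (l : ℕ) : AddAction (ZMod n) {s : Finset (ZMod n) // s.card = l} where
  vadd g s := ⟨s.1.image (· + g), by
    rw [Finset.card_image_of_injective _ (add_left_injective g), s.2]⟩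
  zero_vadd s := by
    apply Subtype.ext
    show Finset.image (· + 0) s.1 = s.1
    simp
  add_vadd a b s := by
    apply Subtype.ext
    show Finset.image (· + (a + b)) s.1 = Finset.image (· + a) (Finset.image (· + b) s.1)
    rw [Finset.image_image]
    apply Finset.image_congr
    intro x _
    show x + (a + b) = x + b + a
    rw [add_assoc, add_comm a b]

lemma card_fixedBy (l : ℕ) (g : ZMod n) :
    Fintype.card (AddAction.fixedBy {s : Finset (ZMod n) // s.card = l} g)
      = if addOrderOf g ∣ l then (n / addOrderOf g).choose (l / addOrderOf g) else 0 := by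
  rw [← card_fixed_sets l g, Fintype.card_subtype]
  apply Finset.card_bij (i := fun (x : {s : Finset (ZMod n) // s.card = l}) _ => x.1)
  · intro x hx
    rw [Finset.mem_filter] at hx ⊢
    refine ⟨Finset.mem_univ _, ?_, x.2⟩
    have := hx.2
    rw [AddAction.mem_fixedBy] at this
    exact congrArg Subtype.val this
  · intro a ha b hb hab
    exact Subtype.ext hab
  · intro s hs
    rw [Finset.mem_filter] at hs
    obtain ⟨-, hfix, hcard⟩ := hs
    refine ⟨⟨s, hcard⟩, ?_, rfl⟩
    rw [Finset.mem_filter]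
    exact ⟨Finset.mem_univ _, by rw [AddAction.mem_fixedBy]; exact Subtype.ext hfix⟩

end NecklaceAux

theorem necklace_sum_divisible (n l : ℕ) (hn : 1 ≤ n) (hl : l ≤ n) :
    n ∣ ∑ d ∈ (Nat.gcd l n).divisors, d.totient * Nat.choose (n / d) (l / d) := by
  classical
  haveI : NeZero n := ⟨by omega⟩
  set X := {s : Finset (ZMod n) // s.card = l}
  -- Burnside
  have burnside := AddAction.sum_card_fixedBy_eq_card_orbits_mul_card_addGroup (ZMod n) X
  have hdvd : n ∣ ∑ g : ZMod n, Fintype.card (AddAction.fixedBy X g) := by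
    rw [burnside, ZMod.card]
    exact dvd_mul_left n _
  have hsum : ∑ g : ZMod n, Fintype.card (AddAction.fixedBy X g)
      = ∑ d ∈ n.divisors, d.totient * (if d ∣ l then (n / d).choose (l / d) else 0) := by
    rw [← Finset.sum_fiberwise_of_maps_to (g := fun g : ZMod n => addOrderOf g)
      (t := n.divisors) (fun g _ => Nat.mem_divisors.mpr
        ⟨by simpa [ZMod.card] using addOrderOf_dvd_card (x := g), NeZero.ne n⟩)]
    apply Finset.sum_congr rfl
    intro d hd
    rw [Finset.sum_congr rfl (fun g hg => ?_), Finset.sum_const, smul_eq_mul]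
    · congr 1
      have : ({g : ZMod n | addOrderOf g = d} : Finset (ZMod n)).card = d.totient :=
        IsAddCyclic.card_addOrderOf_eq_totient (α := ZMod n)
          (by rw [ZMod.card]; exact (Nat.mem_divisors.mp hd).1)
      convert this using 2
    · rw [NecklaceAux.card_fixedBy l g, (Finset.mem_filter.mp hg).2]
  rw [hsum] at hdvd
  have hset : (Nat.gcd l n).divisors = n.divisors.filter (· ∣ l) := by
    ext d
    simp only [Nat.mem_divisors, Finset.mem_filter]
    constructor
    · rintro ⟨hdg, -⟩
      exact ⟨⟨(Nat.dvd_gcd_iff.mp hdg).2, NeZero.ne n⟩, (Nat.dvd_gcd_iff.mp hdg).1⟩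
    · rintro ⟨⟨hdn, -⟩, hdl⟩
      refine ⟨Nat.dvd_gcd hdl hdn, ?_⟩
      intro h0
      exact NeZero.ne n (Nat.eq_zero_of_gcd_eq_zero_right h0)
  have hfinal : ∑ d ∈ n.divisors, d.totient * (if d ∣ l then (n / d).choose (l / d) else 0)
      = ∑ d ∈ (Nat.gcd l n).divisors, d.totient * Nat.choose (n / d) (l / d) := by
    rw [hset, Finset.sum_filter]
    apply Finset.sum_congr rfl
    intro d _
    by_cases h : d ∣ l <;> simp [h]
  rwa [hfinal] at hdvd
end

section
/- For even n ≥ 2, the number of binary necklaces of length n containing an even number of 1's equals (1/2)·N₂(n) + (1/(2n))·Σ_{d | n, 2 | d} φ(d)·2^{n/d}, where N₂(n) = (1/n)·Σ_{d | n} φ(d)·2^{n/d} is the total number of binary necklaces of length n. -/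
/-- Rotation relation restricted to strings with an even number of ones. -/
def necklaceRelEven (n : ℕ) (f g : {f : Fin n → Bool // Even (onesCount f)}) : Prop :=
  necklaceRel n f.1 g.1

/-- Total number of binary necklaces of length `n`. -/
noncomputable def N₂ (n : ℕ) : ℕ :=
  (∑ d ∈ n.divisors, d.totient * 2 ^ (n / d)) / n

namespace NecklaceAux

open Finset MulAction

variable {n : ℕ}

/-! ### Basic facts about powers of `finRotate` -/

lemma finRotate_pow_val (hn : 0 < n) (k : ℕ) (i : Fin n) :
    ((finRotate n ^ k) i).val = (i.val + k) % n := by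
  obtain ⟨m, rfl⟩ : ∃ m, n = m + 1 := ⟨n - 1, by omega⟩
  induction k with
  | zero => simp [Nat.mod_eq_of_lt i.isLt]
  | succ k ih =>
    rw [pow_succ', Equiv.Perm.mul_apply, finRotate_succ_apply, Fin.val_add, ih, Fin.val_one',
      show i.val + (k + 1) = i.val + k + 1 by omega, Nat.add_mod (i.val + k) 1]

lemma finRotate_pow_n (hn : 0 < n) : finRotate n ^ n = 1 := by
  ext i
  simp only [Equiv.Perm.coe_one, id_eq, ← Fin.val_inj, finRotate_pow_val hn,
    Nat.add_mod_right, Nat.mod_eq_of_lt i.isLt]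

lemma finRotate_pow_mod (hn : 0 < n) (k : ℕ) : finRotate n ^ k = finRotate n ^ (k % n) := by
  conv_lhs => rw [← Nat.div_add_mod k n]
  rw [pow_add, pow_mul, finRotate_pow_n hn, one_pow, one_mul]

lemma comp_comp (f : Fin n → Bool) (a b : ℕ) :
    (f ∘ ⇑(finRotate n ^ a)) ∘ ⇑(finRotate n ^ b) = f ∘ ⇑(finRotate n ^ (a + b)) := by
  rw [Function.comp_assoc, ← Equiv.Perm.coe_mul, ← pow_add]

lemma comp_pow_fixed {m : ℕ} {f : Fin n → Bool}
    (hf : f ∘ ⇑(finRotate n ^ m) = f) (c : ℕ) : f ∘ ⇑(finRotate n ^ (m * c)) = f := by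
  induction c with
  | zero => simp
  | succ c ih =>
    have : finRotate n ^ (m * (c + 1)) = finRotate n ^ (m * c) * finRotate n ^ m := by
      rw [← pow_add]; ring_nf
    rw [this]
    funext i
    show f ((finRotate n ^ (m*c)) ((finRotate n ^ m) i)) = f i
    exact (congrFun ih ((finRotate n ^ m) i)).trans (congrFun hf i)

lemma gcd_fixed (hn : 0 < n) {m : ℕ} {f : Fin n → Bool}
    (hf : f ∘ ⇑(finRotate n ^ m) = f) : f ∘ ⇑(finRotate n ^ (Nat.gcd n m)) = f := by
  haveI : NeZero n := ⟨hn.ne'⟩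
  set g := Nat.gcd n m with hg
  have key : ∃ c : ℕ, m * c ≡ g [MOD n] := by
    refine ⟨(((Nat.gcdB n m : ZMod n))).val, ?_⟩
    rw [← ZMod.natCast_eq_natCast_iff]
    push_cast
    rw [ZMod.natCast_rightInverse _]
    have hbezout : ((Nat.gcd n m : ℤ) : ZMod n) = ((n * Nat.gcdA n m + m * Nat.gcdB n m : ℤ) : ZMod n) := by
      rw [← Nat.gcd_eq_gcd_ab]
    push_cast at hbezout
    rw [ZMod.natCast_self, zero_mul, zero_add] at hbezout
    rw [← hbezout]
  obtain ⟨c, hc⟩ := key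
  have : finRotate n ^ (m * c) = finRotate n ^ g := by
    rw [finRotate_pow_mod hn (m*c), finRotate_pow_mod hn g, hc]
  rw [← this]
  exact comp_pow_fixed hf c

/-! ### Periodic extension and the fixed-point bijection -/

/-- Extend a function on `Fin g` periodically to `Fin n`. -/
def back (n : ℕ) {g : ℕ} (hg : 0 < g) (h : Fin g → Bool) : Fin n → Bool :=
  fun i => h ⟨i.val % g, Nat.mod_lt _ hg⟩

lemma back_fixed (hn : 0 < n) {g m : ℕ} (hg : 0 < g) (hgn : g ∣ n) (hgm : g ∣ m)
    (h : Fin g → Bool) : back n hg h ∘ ⇑(finRotate n ^ m) = back n hg h := by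
  funext i
  show h _ = h _
  congr 1
  ext
  show (((finRotate n ^ m) i).val) % g = i.val % g
  rw [finRotate_pow_val hn, Nat.mod_mod_of_dvd _ hgn]
  obtain ⟨t, rfl⟩ := hgm
  rw [Nat.add_mul_mod_self_left]

lemma periodic_of_fixed (hn : 0 < n) {g : ℕ} (hg : 0 < g) {f : Fin n → Bool}
    (hf : f ∘ ⇑(finRotate n ^ g) = f) (i : Fin n) :
    f i = f ⟨i.val % g, Nat.lt_of_le_of_lt (Nat.mod_le _ _) i.isLt⟩ := by
  have step : ∀ x (hx : x + g < n), f ⟨x + g, hx⟩ = f ⟨x, by omega⟩ := by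
    intro x hx
    have := congrFun hf ⟨x, by omega⟩
    show f _ = f _
    rw [← this]
    show f _ = f _
    congr 1
    ext
    rw [finRotate_pow_val hn]
    exact (Nat.mod_eq_of_lt hx).symm
  have main : ∀ q r (hr : r < n) (h2 : r + q * g < n), f ⟨r + q * g, h2⟩ = f ⟨r, hr⟩ := by
    intro q
    induction q with
    | zero => intro r hr h2; congr 1; ext; simp
    | succ q ih =>
      intro r hr h2
      have hx : r + q * g + g < n := by have : r + (q+1) * g = r + q * g + g := by ring
                                        omega
      have e1 : f ⟨r + (q+1) * g, h2⟩ = f ⟨r + q * g + g, hx⟩ := by congr 1; ext; ring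
      rw [e1, step _ hx, ih r hr (by omega)]
  have hi : i.val % g + (i.val / g) * g = i.val := Nat.mod_add_div' _ _
  have := main (i.val / g) (i.val % g) (Nat.lt_of_le_of_lt (Nat.mod_le _ _) i.isLt) (by omega)
  rw [← this]
  congr 1
  ext
  exact hi.symm

/-- The bijection between strings fixed by rotation by `m` and strings on `Fin (gcd n m)`. -/
def fixedEquiv (hn : 0 < n) (m : ℕ) :
    {f : Fin n → Bool // f ∘ ⇑(finRotate n ^ m) = f} ≃ (Fin (Nat.gcd n m) → Bool) where
  toFun f := fun j => f.1 ⟨j.val, lt_of_lt_of_le j.isLt (Nat.le_of_dvd hn (Nat.gcd_dvd_left n m))⟩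
  invFun h := ⟨back n (Nat.gcd_pos_of_pos_left m hn) h,
    back_fixed hn _ (Nat.gcd_dvd_left n m) (Nat.gcd_dvd_right n m) h⟩
  left_inv f := by
    apply Subtype.ext
    funext i
    show f.1 _ = f.1 i
    rw [periodic_of_fixed hn (Nat.gcd_pos_of_pos_left m hn) (gcd_fixed hn f.2) i]
  right_inv h := by
    funext j
    show h _ = h j
    congr 1
    ext
    exact Nat.mod_eq_of_lt j.isLt

/-! ### Counting lemmas -/

lemma onesCount_eq_card (f : Fin n → Bool) :
    onesCount f = Fintype.card {i : Fin n // f i = true} := by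
  rw [Fintype.card_subtype]; rfl

def sndSubtype {α β : Type*} (q : β → Prop) : {p : α × β // q p.2} ≃ α × {b // q b} where
  toFun x := (x.1.1, ⟨x.1.2, x.2⟩)
  invFun x := ⟨(x.1, x.2.1), x.2.2⟩
  left_inv _ := rfl
  right_inv _ := rfl

def subtypeSwap {α : Type*} (P Q : α → Prop) :
    {x : {a // P a} // Q x.1} ≃ {y : {a // Q a} // P y.1} :=
  ⟨fun x => ⟨⟨x.1.1, x.2⟩, x.1.2⟩, fun y => ⟨⟨y.1.1, y.2⟩, y.1.2⟩, fun _ => rfl, fun _ => rfl⟩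

lemma onesCount_back {g : ℕ} (hg : 0 < g) (hgn : g ∣ n) (h : Fin g → Bool) :
    onesCount (back n hg h) = (n / g) * onesCount h := by
  obtain ⟨d, hd⟩ := hgn
  have hnd : n / g = d := by rw [hd, Nat.mul_div_cancel_left _ hg]
  rw [hnd, onesCount_eq_card, onesCount_eq_card]
  have hdg : n = d * g := by rw [hd, mul_comm]
  let e : Fin n ≃ Fin d × Fin g := (finCongr hdg).trans finProdFinEquiv.symm
  have hval : ∀ p : Fin d × Fin g, (e.symm p).val = p.2.val + g * p.1.val := by
    intro p
    show ((finCongr hdg).symm (finProdFinEquiv p)).val = _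
    simp [finProdFinEquiv]
  have he' : ∀ p : Fin d × Fin g, back n hg h (e.symm p) = h p.2 := by
    intro p
    show h _ = h p.2
    congr 1
    ext
    show (e.symm p).val % g = p.2.val
    rw [hval, Nat.add_mul_mod_self_left, Nat.mod_eq_of_lt p.2.isLt]
  have he : ∀ i : Fin n, back n hg h i = h (e i).2 := by
    intro i
    conv_lhs => rw [← e.symm_apply_apply i]
    exact he' (e i)
  have : Fintype.card {i : Fin n // back n hg h i = true}
      = Fintype.card (Fin d × {b : Fin g // h b = true}) := by
    refine Fintype.card_congr ?_
    refine (Equiv.subtypeEquiv e (fun i => by rw [he i])).trans (sndSubtype _)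
  rw [this, Fintype.card_prod, Fintype.card_fin]

lemma onesCount_fixedEquiv_symm (hn : 0 < n) (m : ℕ) (h : Fin (Nat.gcd n m) → Bool) :
    onesCount ((fixedEquiv hn m).symm h).1 = (n / Nat.gcd n m) * onesCount h :=
  onesCount_back (Nat.gcd_pos_of_pos_left m hn) (Nat.gcd_dvd_left n m) h

lemma onesCount_update (h : Fin n → Bool) (i : Fin n) (b : Bool) :
    onesCount (Function.update h i b) + (if h i then 1 else 0)
      = onesCount h + (if b then 1 else 0) := by
  classical
  have key : ∀ (b : Bool), (fun j => if (Function.update h i b j) then (1:ℕ) else 0)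
      = Function.update (fun j => if h j then (1:ℕ) else 0) i (if b then 1 else 0) := by
    intro b; funext j
    by_cases hj : j = i
    · subst hj; simp
    · simp [Function.update_of_ne hj]
  have expand : ∀ (f : Fin n → Bool), onesCount f = ∑ j, if f j then (1:ℕ) else 0 := by
    intro f; rw [onesCount, Finset.card_filter]
  rw [expand, expand, key]
  rw [Finset.sum_update_of_mem (Finset.mem_univ i)]
  have : (∑ j, if h j then (1:ℕ) else 0)
      = (if h i = true then (1:ℕ) else 0) + ∑ j ∈ Finset.univ \ {i}, if h j then (1:ℕ) else 0 := by
    rw [← Finset.erase_eq]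
    exact (Finset.add_sum_erase _ _ (Finset.mem_univ i)).symm
  rw [this]
  ring

lemma card_even_ones {g : ℕ} (hg : 0 < g) :
    Fintype.card {h : Fin g → Bool // Even (onesCount h)} = 2 ^ (g - 1) := by
  classical
  set i : Fin g := ⟨0, hg⟩
  have flip_parity : ∀ h : Fin g → Bool,
      onesCount (Function.update h i (!h i)) % 2 = (onesCount h + 1) % 2 := by
    intro h
    have := onesCount_update h i (!h i)
    cases hb : h i <;> simp [hb] at this ⊢ <;> omega
  have flip_invol : ∀ h : Fin g → Bool,
      Function.update (Function.update h i (!h i)) i (!(Function.update h i (!h i)) i) = h := by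
    intro h
    simp [Function.update_idem]
  have e : {h : Fin g → Bool // Even (onesCount h)} ≃ {h : Fin g → Bool // ¬ Even (onesCount h)} := by
    refine ⟨fun x => ⟨Function.update x.1 i (!x.1 i), ?_⟩,
            fun x => ⟨Function.update x.1 i (!x.1 i), ?_⟩, ?_, ?_⟩
    · have := flip_parity x.1; have hx := x.2
      rw [Nat.even_iff] at hx ⊢
      omega
    · have := flip_parity x.1; have hx := x.2
      rw [Nat.even_iff] at hx ⊢
      omega
    · intro x; apply Subtype.ext; exact flip_invol x.1
    · intro x; apply Subtype.ext; exact flip_invol x.1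
  have hcompl : Fintype.card {h : Fin g → Bool // ¬ Even (onesCount h)}
      = 2 ^ g - Fintype.card {h : Fin g → Bool // Even (onesCount h)} := by
    rw [Fintype.card_subtype_compl, Fintype.card_fun, Fintype.card_bool, Fintype.card_fin]
  have hle : Fintype.card {h : Fin g → Bool // Even (onesCount h)} ≤ 2 ^ g := by
    rw [show (2:ℕ)^g = Fintype.card (Fin g → Bool) by rw [Fintype.card_fun]; simp]
    exact Fintype.card_subtype_le _
  have hcongr := Fintype.card_congr e
  have h2 : (2:ℕ) ^ (g-1) * 2 = 2 ^ g := by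
    rw [← pow_succ]; congr 1; omega
  omega

/-! ### The rotation action -/

lemma onesCount_comp (f : Fin n → Bool) (τ : Equiv.Perm (Fin n)) :
    onesCount (f ∘ ⇑τ) = onesCount f := by
  apply Finset.card_equiv τ
  intro i
  simp

lemma necklaceRel_symm (hn : 0 < n) {f g : Fin n → Bool} (h : necklaceRel n f g) :
    necklaceRel n g f := by
  obtain ⟨m, rfl⟩ := h
  refine ⟨n - m % n, ?_⟩
  rw [comp_comp, show m + (n - m % n) = n * (m / n) + n by
      have h1 := Nat.div_add_mod m n
      have h2 := Nat.mod_lt m hn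
      omega, pow_add, pow_mul, finRotate_pow_n hn, one_pow, one_mul]
  simp

variable (n) in
abbrev EvenStr := {f : Fin n → Bool // Even (onesCount f)}

instance rotAction [NeZero n] : MulAction (Multiplicative (ZMod n)) (EvenStr n) where
  smul k x := ⟨x.1 ∘ ⇑(finRotate n ^ (Multiplicative.toAdd k).val),
    by rw [onesCount_comp]; exact x.2⟩
  one_smul x := by
    apply Subtype.ext
    show x.1 ∘ ⇑(finRotate n ^ (Multiplicative.toAdd (1 : Multiplicative (ZMod n))).val) = x.1
    have : (Multiplicative.toAdd (1 : Multiplicative (ZMod n))).val = 0 := by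
      simp [ZMod.val_zero]
    rw [this, pow_zero]
    rfl
  mul_smul a b x := by
    apply Subtype.ext
    show x.1 ∘ ⇑(finRotate n ^ (Multiplicative.toAdd (a * b)).val)
      = (x.1 ∘ ⇑(finRotate n ^ (Multiplicative.toAdd b).val))
        ∘ ⇑(finRotate n ^ (Multiplicative.toAdd a).val)
    rw [comp_comp]
    have hpos : 0 < n := Nat.pos_of_ne_zero (NeZero.ne n)
    have : (Multiplicative.toAdd (a * b)).val
        = ((Multiplicative.toAdd a).val + (Multiplicative.toAdd b).val) % n := by
      rw [toAdd_mul, ZMod.val_add]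
    rw [this, ← finRotate_pow_mod hpos, Nat.add_comm]

lemma smul_def [NeZero n] (k : Multiplicative (ZMod n)) (x : EvenStr n) :
    (k • x).1 = x.1 ∘ ⇑(finRotate n ^ (Multiplicative.toAdd k).val) := rfl

lemma rel_iff_orbitRel [NeZero n] (x y : EvenStr n) :
    necklaceRelEven n x y ↔ x ∈ orbit (Multiplicative (ZMod n)) y := by
  have hpos : 0 < n := Nat.pos_of_ne_zero (NeZero.ne n)
  rw [mem_orbit_iff]
  constructor
  · rintro h
    obtain ⟨m, hm⟩ := necklaceRel_symm hpos h
    refine ⟨Multiplicative.ofAdd ((m : ZMod n)), ?_⟩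
    apply Subtype.ext
    show y.1 ∘ ⇑(finRotate n ^ (ZMod.val ((m : ZMod n)))) = x.1
    rw [ZMod.val_natCast, ← finRotate_pow_mod hpos]
    exact hm.symm
  · rintro ⟨k, hk⟩
    have : x.1 = y.1 ∘ ⇑(finRotate n ^ (Multiplicative.toAdd k).val) := by
      rw [← congrArg Subtype.val hk]; rfl
    exact necklaceRel_symm hpos ⟨_, this⟩

/-- A copy of the full space of binary strings (to avoid instance clashes on `Fin n → Bool`). -/
def FullStr (n : ℕ) := Fin n → Bool

instance : Fintype (FullStr n) := inferInstanceAs (Fintype (Fin n → Bool))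

instance fullAction [NeZero n] : MulAction (Multiplicative (ZMod n)) (FullStr n) where
  smul k f := ((f : Fin n → Bool) ∘ ⇑(finRotate n ^ (Multiplicative.toAdd k).val) : FullStr n)
  one_smul f := by
    show (f : Fin n → Bool) ∘ ⇑(finRotate n ^ (Multiplicative.toAdd (1 : Multiplicative (ZMod n))).val) = f
    have : (Multiplicative.toAdd (1 : Multiplicative (ZMod n))).val = 0 := by
      simp [ZMod.val_zero]
    rw [this, pow_zero]
    rfl
  mul_smul a b f := by
    show (f : Fin n → Bool) ∘ ⇑(finRotate n ^ (Multiplicative.toAdd (a * b)).val)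
      = ((f : Fin n → Bool) ∘ ⇑(finRotate n ^ (Multiplicative.toAdd b).val))
        ∘ ⇑(finRotate n ^ (Multiplicative.toAdd a).val)
    erw [comp_comp]
    have hpos : 0 < n := Nat.pos_of_ne_zero (NeZero.ne n)
    have : (Multiplicative.toAdd (a * b)).val
        = ((Multiplicative.toAdd a).val + (Multiplicative.toAdd b).val) % n := by
      rw [toAdd_mul, ZMod.val_add]
    rw [this, ← finRotate_pow_mod hpos, Nat.add_comm]

lemma smul_def_full [NeZero n] (k : Multiplicative (ZMod n)) (f : FullStr n) :
    (k • f : FullStr n) = ((f : Fin n → Bool) ∘ ⇑(finRotate n ^ (Multiplicative.toAdd k).val) : FullStr n) := rfl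

/-! ### Fixed point counts -/

lemma card_fixedBy_even [NeZero n] (k : Multiplicative (ZMod n)) :
    Nat.card (fixedBy (EvenStr n) k)
      = if Even (n / Nat.gcd n (Multiplicative.toAdd k).val)
        then 2 ^ (Nat.gcd n (Multiplicative.toAdd k).val)
        else 2 ^ (Nat.gcd n (Multiplicative.toAdd k).val - 1) := by
  have hn : 0 < n := Nat.pos_of_ne_zero (NeZero.ne n)
  set m := (Multiplicative.toAdd k).val with hm
  set g := Nat.gcd n m with hg
  set d := n / g with hd
  have e1 : ↥(fixedBy (EvenStr n) k) ≃ {x : EvenStr n // x.1 ∘ ⇑(finRotate n ^ m) = x.1} :=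
    Equiv.subtypeEquivRight (fun x => by
      rw [mem_fixedBy, ← Subtype.val_inj, smul_def])
  have e2 : {x : EvenStr n // x.1 ∘ ⇑(finRotate n ^ m) = x.1}
      ≃ {y : {f : Fin n → Bool // f ∘ ⇑(finRotate n ^ m) = f} // Even (onesCount y.1)} :=
    subtypeSwap (fun f => Even (onesCount f)) (fun f => f ∘ ⇑(finRotate n ^ m) = f)
  have e3 : {y : {f : Fin n → Bool // f ∘ ⇑(finRotate n ^ m) = f} // Even (onesCount y.1)}
      ≃ {h : Fin g → Bool // Even (d * onesCount h)} := by
    refine Equiv.subtypeEquiv (fixedEquiv hn m) (fun y => ?_)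
    have : y.1 = ((fixedEquiv hn m).symm ((fixedEquiv hn m) y)).1 := by
      rw [Equiv.symm_apply_apply]
    rw [this, onesCount_fixedEquiv_symm hn m]
  have := Nat.card_congr ((e1.trans e2).trans e3)
  rw [this]
  by_cases hpar : Even d
  · rw [if_pos hpar]
    have : {h : Fin g → Bool // Even (d * onesCount h)} ≃ (Fin g → Bool) :=
      Equiv.subtypeUnivEquiv (fun h => hpar.mul_right _)
    rw [Nat.card_congr this, Nat.card_eq_fintype_card, Fintype.card_fun]
    simp
  · rw [if_neg hpar]
    have : {h : Fin g → Bool // Even (d * onesCount h)} ≃ {h : Fin g → Bool // Even (onesCount h)} :=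
      Equiv.subtypeEquivRight (fun h => by
        rw [Nat.even_mul]
        simp [hpar])
    rw [Nat.card_congr this, Nat.card_eq_fintype_card,
      card_even_ones (Nat.gcd_pos_of_pos_left m hn)]

lemma card_fixedBy_full [NeZero n] (k : Multiplicative (ZMod n)) :
    Nat.card (fixedBy (FullStr n) k)
      = 2 ^ (Nat.gcd n (Multiplicative.toAdd k).val) := by
  have hn : 0 < n := Nat.pos_of_ne_zero (NeZero.ne n)
  have e1 : ↥(fixedBy (FullStr n) k)
      ≃ {f : Fin n → Bool // f ∘ ⇑(finRotate n ^ (Multiplicative.toAdd k).val) = f} :=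
    Equiv.subtypeEquivRight (q := fun f : Fin n → Bool => f ∘ ⇑(finRotate n ^ (Multiplicative.toAdd k).val) = f)
      (fun f => by erw [mem_fixedBy, smul_def_full]; exact Iff.rfl)
  rw [Nat.card_congr (e1.trans (fixedEquiv hn _)), Nat.card_eq_fintype_card, Fintype.card_fun]
  simp

/-! ### Burnside and divisor sums -/

lemma burnside (G : Type*) (X : Type*) [Group G] [Fintype G] [Finite X] [MulAction G X] :
    ∑ k : G, Nat.card (fixedBy X k)
      = Nat.card (orbitRel.Quotient G X) * Fintype.card G := by
  classical
  cases nonempty_fintype X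
  letI : ∀ a : G, Fintype (fixedBy X a) := fun a => Fintype.ofFinite _
  letI : Fintype (orbitRel.Quotient G X) := Fintype.ofFinite _
  have h := MulAction.sum_card_fixedBy_eq_card_orbits_mul_card_group G X
  calc ∑ k : G, Nat.card (fixedBy X k)
      = ∑ k : G, Fintype.card (fixedBy X k) :=
        Finset.sum_congr rfl fun k _ => Nat.card_eq_fintype_card
    _ = Fintype.card (Quotient (orbitRel G X)) * Fintype.card G := h
    _ = Nat.card (orbitRel.Quotient G X) * Fintype.card G := by
        congr 1
        exact Nat.card_eq_fintype_card.symm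

lemma group_sum_eq [NeZero n] (F : ℕ → ℕ) :
    ∑ k : Multiplicative (ZMod n), F (Nat.gcd n (Multiplicative.toAdd k).val)
      = ∑ d ∈ n.divisors, Nat.totient (n / d) * F d := by
  have hn : 0 < n := Nat.pos_of_ne_zero (NeZero.ne n)
  have step1 : ∑ k : Multiplicative (ZMod n), F (Nat.gcd n (Multiplicative.toAdd k).val)
      = ∑ j ∈ Finset.range n, F (Nat.gcd n j) := by
    refine Finset.sum_bij' (fun k _ => (Multiplicative.toAdd k).val)
      (fun j _ => Multiplicative.ofAdd ((j : ZMod n))) ?_ ?_ ?_ ?_ ?_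
    · intro k _; exact Finset.mem_range.mpr (ZMod.val_lt _)
    · intro j _; exact Finset.mem_univ _
    · intro k _
      simp [ZMod.natCast_rightInverse _]
    · intro j hj
      simp [ZMod.val_cast_of_lt (Finset.mem_range.mp hj)]
    · intro k _; rfl
  rw [step1]
  have hmaps : ∀ j ∈ Finset.range n, Nat.gcd n j ∈ n.divisors := by
    intro j _
    exact Nat.mem_divisors.mpr ⟨Nat.gcd_dvd_left _ _, hn.ne'⟩
  rw [← Finset.sum_fiberwise_of_maps_to hmaps (fun j => F (Nat.gcd n j))]
  refine Finset.sum_congr rfl (fun d hd => ?_)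
  have : ∀ j ∈ (Finset.range n).filter (fun j => Nat.gcd n j = d), F (Nat.gcd n j) = F d := by
    intro j hj
    rw [(Finset.mem_filter.mp hj).2]
  rw [Finset.sum_congr rfl this, Finset.sum_const, smul_eq_mul,
    ← Nat.totient_div_of_dvd (Nat.mem_divisors.mp hd).1]

lemma divisor_flip (F : ℕ → ℕ) (hn : 0 < n) :
    ∑ d ∈ n.divisors, Nat.totient (n / d) * F d
      = ∑ e ∈ n.divisors, Nat.totient e * F (n / e) := by
  have : ∀ d ∈ n.divisors, Nat.totient (n / d) * F d
      = (fun e => Nat.totient e * F (n / e)) (n / d) := by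
    intro d hd
    simp only []
    rw [Nat.div_div_self (Nat.mem_divisors.mp hd).1 hn.ne']
  rw [Finset.sum_congr rfl this, Nat.sum_div_divisors n (fun e => Nat.totient e * F (n / e))]

end NecklaceAux

theorem necklaces_with_even_ones (n : ℕ) (hn : 2 ≤ n) (he : Even n) :
    2 * n * Nat.card (Quot (necklaceRelEven n)) =
      n * N₂ n + ∑ d ∈ n.divisors.filter (fun d => 2 ∣ d), d.totient * 2 ^ (n / d) := by
  open NecklaceAux MulAction in
  haveI : NeZero n := ⟨by omega⟩
  have hpos : 0 < n := by omega
  set G := Multiplicative (ZMod n)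
  have hcardG : Fintype.card G = n := by
    rw [Fintype.card_multiplicative, ZMod.card]
  have hquot : Nat.card (Quot (necklaceRelEven n))
      = Nat.card (orbitRel.Quotient G (EvenStr n)) :=
    Nat.card_congr (Quot.congrRight (fun x y => rel_iff_orbitRel x y))
  have hb_even : ∑ k : G, Nat.card (fixedBy (EvenStr n) k)
      = Nat.card (orbitRel.Quotient G (EvenStr n)) * n := by
    rw [burnside G (EvenStr n), hcardG]
  have hb_full : ∑ k : G, Nat.card (fixedBy (FullStr n) k)
      = Nat.card (orbitRel.Quotient G (FullStr n)) * n := by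
    rw [burnside G (FullStr n), hcardG]
  set Feven : ℕ → ℕ := fun g => if Even (n / g) then 2 ^ g else 2 ^ (g - 1) with hFeven
  have hsum_even : ∑ k : G, Nat.card (fixedBy (EvenStr n) k)
      = ∑ e ∈ n.divisors, Nat.totient e * Feven (n / e) := by
    rw [show (∑ k : G, Nat.card (fixedBy (EvenStr n) k))
        = ∑ k : G, Feven (Nat.gcd n (Multiplicative.toAdd k).val) from
      Finset.sum_congr rfl (fun k _ => card_fixedBy_even k),
      group_sum_eq Feven, divisor_flip Feven hpos]
  have hsum_full : ∑ k : G, Nat.card (fixedBy (FullStr n) k)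
      = ∑ e ∈ n.divisors, Nat.totient e * 2 ^ (n / e) := by
    rw [show (∑ k : G, Nat.card (fixedBy (FullStr n) k))
        = ∑ k : G, (fun g => 2 ^ g) (Nat.gcd n (Multiplicative.toAdd k).val) from
      Finset.sum_congr rfl (fun k _ => card_fixedBy_full k),
      group_sum_eq (fun g => 2 ^ g), divisor_flip (fun g => 2 ^ g) hpos]
  set A := ∑ d ∈ n.divisors, Nat.totient d * 2 ^ (n / d) with hA
  have hNA : n * N₂ n = A := by
    have hdvd : n ∣ A := ⟨Nat.card (orbitRel.Quotient G (FullStr n)), by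
      rw [← hsum_full, hb_full, mul_comm]⟩
    obtain ⟨c, hc⟩ := hdvd
    rw [N₂, ← hA, hc, Nat.mul_div_cancel_left c hpos]
  have hsplit : ∑ e ∈ n.divisors, Nat.totient e * Feven (n / e)
      = (∑ e ∈ n.divisors.filter (fun d => 2 ∣ d), Nat.totient e * 2 ^ (n / e))
        + ∑ e ∈ n.divisors.filter (fun d => ¬ 2 ∣ d), Nat.totient e * 2 ^ (n / e - 1) := by
    rw [← Finset.sum_filter_add_sum_filter_not n.divisors (fun d => 2 ∣ d)]
    congr 1
    · refine Finset.sum_congr rfl (fun e he' => ?_)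
      have heven : Even (n / (n / e)) := by
        rw [Nat.div_div_self (Nat.mem_divisors.mp (Finset.mem_filter.mp he').1).1 hpos.ne']
        obtain ⟨c, hc⟩ := (Finset.mem_filter.mp he').2
        exact ⟨c, by omega⟩
      rw [hFeven]
      simp only [if_pos heven]
    · refine Finset.sum_congr rfl (fun e he' => ?_)
      have hodd : ¬ Even (n / (n / e)) := by
        rw [Nat.div_div_self (Nat.mem_divisors.mp (Finset.mem_filter.mp he').1).1 hpos.ne']
        have hne := (Finset.mem_filter.mp he').2
        rintro ⟨c, hc⟩
        exact hne ⟨c, by omega⟩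
      rw [hFeven]
      simp only [if_neg hodd]
  set Se := ∑ e ∈ n.divisors.filter (fun d => 2 ∣ d), Nat.totient e * 2 ^ (n / e) with hSe
  set So := ∑ e ∈ n.divisors.filter (fun d => ¬ 2 ∣ d), Nat.totient e * 2 ^ (n / e - 1) with hSo
  have hSofull : 2 * So = ∑ e ∈ n.divisors.filter (fun d => ¬ 2 ∣ d), Nat.totient e * 2 ^ (n / e) := by
    rw [hSo, Finset.mul_sum]
    refine Finset.sum_congr rfl (fun e he' => ?_)
    have hdvd : e ∣ n := (Nat.mem_divisors.mp (Finset.mem_filter.mp he').1).1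
    have hle : 1 ≤ n / e := Nat.div_pos (Nat.le_of_dvd hpos hdvd)
      (Nat.pos_of_dvd_of_pos hdvd hpos)
    have : 2 ^ (n / e) = 2 * 2 ^ (n / e - 1) := by
      rw [← pow_succ']
      congr 1
      omega
    rw [this]
    ring
  have hAsplit : A = Se + (∑ e ∈ n.divisors.filter (fun d => ¬ 2 ∣ d), Nat.totient e * 2 ^ (n / e)) := by
    rw [hA, ← Finset.sum_filter_add_sum_filter_not n.divisors (fun d => 2 ∣ d)]
  have hmain : n * Nat.card (Quot (necklaceRelEven n)) = Se + So := by
    rw [hquot, mul_comm, ← hb_even, hsum_even, hsplit]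
  have e1 : 2 * n * Nat.card (Quot (necklaceRelEven n)) = 2 * (Se + So) := by
    rw [mul_assoc, hmain]
  omega
end

section
/- For even n ≥ 2, the number of binary necklaces of length n containing an odd number of 1's equals (1/(2n))·Σ_{d | n, d odd} φ(d)·2^{n/d}. -/
/-- Rotation relation restricted to strings with an odd number of ones. -/
def necklaceRelOdd (n : ℕ) (f g : {f : Fin n → Bool // Odd (onesCount f)}) : Prop :=
  necklaceRel n f.1 g.1


/-- The permutations fixing a function `f` by right composition form a subgroup. -/
def compStab {α β : Type*} (f : α → β) : Subgroup (Equiv.Perm α) where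
  carrier := {π | f ∘ ⇑π = f}
  one_mem' := rfl
  mul_mem' := by
    intro a b ha hb
    simp only [Set.mem_setOf_eq] at *
    funext x
    simp only [Function.comp_apply, Equiv.Perm.mul_apply]
    rw [← Function.comp_apply (f := f) (g := ⇑a), ha,
      ← Function.comp_apply (f := f) (g := ⇑b), hb]
  inv_mem' := by
    intro a ha
    simp only [Set.mem_setOf_eq] at *
    funext x
    have := congrFun ha (a⁻¹ x)
    simpa using this.symm

lemma mem_compStab {α β : Type*} (f : α → β) (π : Equiv.Perm α) :
    π ∈ compStab f ↔ f ∘ ⇑π = f := Iff.rfl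

lemma orderOf_finRotate' {n : ℕ} (hn : 2 ≤ n) : orderOf (finRotate n) = n := by
  rw [(isCycle_finRotate_of_le hn).orderOf, support_finRotate_of_le hn,
    Finset.card_univ, Fintype.card_fin]

/-- fixedness under `σ^k` is equivalent to fixedness under `σ^(gcd n k)`. -/
lemma fixed_pow_iff_gcd {n k : ℕ} (hn : 2 ≤ n) (f : Fin n → Bool) :
    f ∘ ⇑((finRotate n) ^ k) = f ↔ f ∘ ⇑((finRotate n) ^ (Nat.gcd n k)) = f := by
  have hσn : (finRotate n) ^ n = 1 := by
    have := pow_orderOf_eq_one (finRotate n)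
    rwa [orderOf_finRotate' hn] at this
  rw [← mem_compStab, ← mem_compStab]
  constructor
  · intro h
    have hbez : (Nat.gcd n k : ℤ) = n * Nat.gcdA n k + k * Nat.gcdB n k :=
      Nat.gcd_eq_gcd_ab n k
    have heq : (finRotate n) ^ (Nat.gcd n k : ℤ) = ((finRotate n) ^ k) ^ (Nat.gcdB n k) := by
      rw [hbez, zpow_add, zpow_mul, zpow_mul, zpow_natCast, zpow_natCast, hσn, one_zpow, one_mul]
    have h2 : (finRotate n) ^ (Nat.gcd n k : ℤ) ∈ compStab f :=
      heq ▸ Subgroup.zpow_mem _ h _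
    rwa [zpow_natCast] at h2
  · intro h
    have heq : (finRotate n) ^ k = ((finRotate n) ^ Nat.gcd n k) ^ (k / Nat.gcd n k) := by
      rw [← pow_mul, Nat.mul_div_cancel' (Nat.gcd_dvd_right n k)]
    exact heq ▸ Subgroup.pow_mem _ h _



lemma finRotate_pow_val {n : ℕ} (k : ℕ) : ∀ i : Fin (n + 1),
    (((finRotate (n + 1)) ^ k) i).val = (i.val + k) % (n + 1) := by
  induction k with
  | zero => intro i; simp [Nat.mod_eq_of_lt i.isLt]
  | succ k ih =>
    intro i
    rw [pow_succ', Equiv.Perm.mul_apply, finRotate_succ_apply, Fin.add_def, Fin.val_one', ih]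
    simp only [Fin.val_mk]
    rw [Nat.mod_add_mod, Nat.add_mod_mod, Nat.add_assoc]

lemma finRotate_pow_val' {n : ℕ} (hn : 2 ≤ n) (k : ℕ) (i : Fin n) :
    (((finRotate n) ^ k) i).val = (i.val + k) % n := by
  obtain ⟨m, rfl⟩ : ∃ m, n = m + 1 := ⟨n - 1, by omega⟩
  exact finRotate_pow_val k i

/-- Extend a string of length `g` periodically to length `n`. -/
def liftStr {n g : ℕ} (hg0 : 0 < g) (h : Fin g → Bool) : Fin n → Bool :=
  fun i => h ⟨i.val % g, Nat.mod_lt _ hg0⟩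

def e2 {α β : Type*} (p : β → Prop) : {pr : α × β // p pr.2} ≃ α × {b // p b} :=
  ⟨fun x => (x.1.1, ⟨x.1.2, x.2⟩), fun y => ⟨(y.1, y.2.1), y.2.2⟩, fun _ => rfl, fun _ => rfl⟩

def eDiv {n g : ℕ} (hg : g ∣ n) : Fin n ≃ Fin (n / g) × Fin g :=
  (finCongr (Nat.div_mul_cancel hg).symm).trans finProdFinEquiv.symm

lemma eDiv_snd {n g : ℕ} (hg : g ∣ n) (hg0 : 0 < g) (i : Fin n) :
    (eDiv hg i).2 = ⟨i.val % g, Nat.mod_lt _ hg0⟩ := by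
  apply Fin.ext
  simp [eDiv, Fin.modNat]

lemma onesCount_liftStr {n g : ℕ} (hg : g ∣ n) (hg0 : 0 < g) (h : Fin g → Bool) :
    onesCount (liftStr hg0 h : Fin n → Bool) = (n / g) * onesCount h := by
  classical
  have c1 : ∀ (m : ℕ) (f : Fin m → Bool), onesCount f = Fintype.card {i // f i = true} := by
    intro m f; rw [Fintype.card_subtype]; rfl
  rw [c1, c1]
  have key : ∀ i : Fin n, (liftStr hg0 h i = true) ↔ (h (eDiv hg i).2 = true) := by
    intro i; rw [eDiv_snd hg hg0]; rfl
  rw [Fintype.card_congr ((Equiv.subtypeEquiv (eDiv hg) key).trans (e2 (fun b => h b = true)))]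
  rw [Fintype.card_prod, Fintype.card_fin]

lemma liftStr_fixed {n g : ℕ} (hn : 2 ≤ n) (hg : g ∣ n) (hg0 : 0 < g) (h : Fin g → Bool) :
    (liftStr hg0 h : Fin n → Bool) ∘ ⇑((finRotate n) ^ g) = liftStr hg0 h := by
  funext i
  simp only [Function.comp_apply, liftStr]
  congr 1
  apply Fin.ext
  simp only
  rw [finRotate_pow_val' hn g i, Nat.mod_mod_of_dvd _ hg, Nat.add_mod_right]

lemma fixed_eq_liftStr {n g : ℕ} (hn : 2 ≤ n) (hg : g ∣ n) (hg0 : 0 < g)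
    (f : Fin n → Bool) (hf : f ∘ ⇑((finRotate n) ^ g) = f) :
    liftStr hg0 (fun j => f ⟨j.val, lt_of_lt_of_le j.isLt (Nat.le_of_dvd (by omega) hg)⟩) = f := by
  have step : ∀ v : ℕ, (hv : v + g < n) → f ⟨v + g, hv⟩ = f ⟨v, by omega⟩ := by
    intro v hv
    have h2 := congrFun hf ⟨v, by omega⟩
    simp only [Function.comp_apply] at h2
    rw [← h2]
    congr 1
    apply Fin.ext
    rw [finRotate_pow_val' hn]
    exact (Nat.mod_eq_of_lt hv).symm
  have claim : ∀ v, ∀ hv : v < n,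
      f ⟨v % g, (Nat.mod_lt v hg0).trans_le (Nat.le_of_dvd (by omega) hg)⟩ = f ⟨v, hv⟩ := by
    intro v
    induction v using Nat.strong_induction_on with
    | _ v ih =>
      intro hv
      by_cases hvg : v < g
      · congr 1
        exact Fin.ext (Nat.mod_eq_of_lt hvg)
      · push_neg at hvg
        have hw : v - g < n := by omega
        have h3 : f ⟨v, hv⟩ = f ⟨v - g, hw⟩ := by
          have h4 := step (v - g) (by omega)
          have h5 : f ⟨v, hv⟩ = f ⟨v - g + g, by omega⟩ :=
            congrArg f (Fin.ext (show v = v - g + g from by omega))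
          exact h5.trans h4
        have h1 : f ⟨v % g, (Nat.mod_lt v hg0).trans_le (Nat.le_of_dvd (by omega) hg)⟩
            = f ⟨(v - g) % g, (Nat.mod_lt _ hg0).trans_le (Nat.le_of_dvd (by omega) hg)⟩ := by
          congr 1
          apply Fin.ext
          show v % g = (v - g) % g
          conv_lhs => rw [show v = (v - g) + g from by omega]
          rw [Nat.add_mod_right]
        exact h1.trans ((ih (v - g) (by omega) hw).trans h3.symm)
  funext i
  exact claim i.val i.isLt



lemma odd_onesCount_update {g : ℕ} (h : Fin g → Bool) (i0 : Fin g) :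
    Odd (onesCount (Function.update h i0 (!h i0))) ↔ ¬ Odd (onesCount h) := by
  classical
  unfold onesCount
  rcases Bool.eq_false_or_eq_true (h i0) with hb | hb
  · have hfe : (Finset.univ.filter (fun i => Function.update h i0 (!h i0) i = true))
        = (Finset.univ.filter (fun i => h i = true)).erase i0 := by
      ext i
      by_cases hi : i = i0
      · subst hi; simp [Function.update_self, hb]
      · simp [Function.update_of_ne hi, hi]
    have hmem : i0 ∈ Finset.univ.filter (fun i => h i = true) := by simp [hb]
    have hc1 : 1 ≤ (Finset.univ.filter (fun i => h i = true)).card :=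
      Finset.card_pos.mpr ⟨i0, hmem⟩
    rw [hfe, Finset.card_erase_of_mem hmem]
    simp [Nat.odd_iff]
    omega
  · have hfe : (Finset.univ.filter (fun i => Function.update h i0 (!h i0) i = true))
        = insert i0 (Finset.univ.filter (fun i => h i = true)) := by
      ext i
      by_cases hi : i = i0
      · subst hi; simp [Function.update_self, hb]
      · simp [Function.update_of_ne hi, hi]
    rw [hfe, Finset.card_insert_of_notMem (by simp [hb])]
    simp [Nat.odd_iff]
    omega

def flipE {g : ℕ} (i0 : Fin g) :
    {h : Fin g → Bool // Odd (onesCount h)} ≃ {h : Fin g → Bool // ¬ Odd (onesCount h)} where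
  toFun x := ⟨Function.update x.1 i0 (!x.1 i0), by
    rw [odd_onesCount_update]; simp [x.2]⟩
  invFun y := ⟨Function.update y.1 i0 (!y.1 i0), by
    rw [odd_onesCount_update]; exact y.2⟩
  left_inv x := by
    apply Subtype.ext
    simp [Function.update_idem]
  right_inv y := by
    apply Subtype.ext
    simp [Function.update_idem]

lemma card_odd_weight {g : ℕ} (hg0 : 0 < g) :
    Fintype.card {h : Fin g → Bool // Odd (onesCount h)} = 2 ^ (g - 1) := by
  classical
  have i0 : Fin g := ⟨0, hg0⟩
  have h1 : Fintype.card {h : Fin g → Bool // Odd (onesCount h)}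
      = Fintype.card {h : Fin g → Bool // ¬ Odd (onesCount h)} :=
    Fintype.card_congr (flipE i0)
  have h2 : Fintype.card {h : Fin g → Bool // Odd (onesCount h)}
      + Fintype.card {h : Fin g → Bool // ¬ Odd (onesCount h)}
      = Fintype.card (Fin g → Bool) := by
    rw [Fintype.card_subtype, Fintype.card_subtype,
      Finset.card_filter_add_card_filter_not, Finset.card_univ]
  have h3 : Fintype.card (Fin g → Bool) = 2 ^ g := by
    simp [Fintype.card_fun]
  have h4 : (2 : ℕ) ^ g = 2 * 2 ^ (g - 1) := by
    conv_lhs => rw [show g = (g - 1) + 1 from by omega]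
    rw [pow_succ']
  omega

section
variable {n g : ℕ}

/-- restriction of a fixed string -/
def restrStr (hg : g ∣ n) (hn : 2 ≤ n) (f : Fin n → Bool) : Fin g → Bool :=
  fun j => f ⟨j.val, lt_of_lt_of_le j.isLt (Nat.le_of_dvd (by omega) hg)⟩

def fixedEquiv (hn : 2 ≤ n) (hg : g ∣ n) (hg0 : 0 < g) :
    {f : Fin n → Bool // Odd (onesCount f) ∧ f ∘ ⇑((finRotate n) ^ g) = f}
      ≃ {h : Fin g → Bool // Odd ((n / g) * onesCount h)} where
  toFun f := ⟨restrStr hg hn f.1, by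
    have h1 := fixed_eq_liftStr hn hg hg0 f.1 f.2.2
    have h2 := onesCount_liftStr hg hg0 (restrStr hg hn f.1)
    rw [show liftStr hg0 (restrStr hg hn f.1) = f.1 from h1] at h2
    rw [← h2]
    exact f.2.1⟩
  invFun h := ⟨liftStr hg0 h.1,
    ⟨by rw [onesCount_liftStr hg hg0]; exact h.2, liftStr_fixed hn hg hg0 h.1⟩⟩
  left_inv f := Subtype.ext (fixed_eq_liftStr hn hg hg0 f.1 f.2.2)
  right_inv h := by
    apply Subtype.ext
    funext j
    show (liftStr hg0 h.1 : Fin n → Bool) ⟨j.val, _⟩ = h.1 j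
    unfold liftStr
    exact congrArg h.1 (Fin.ext (by simp [Nat.mod_eq_of_lt j.isLt]))

lemma card_fixed (hn : 2 ≤ n) (hg : g ∣ n) (hg0 : 0 < g) :
    Fintype.card {f : Fin n → Bool // Odd (onesCount f) ∧ f ∘ ⇑((finRotate n) ^ g) = f}
      = if Odd (n / g) then 2 ^ (g - 1) else 0 := by
  classical
  rw [Fintype.card_congr (fixedEquiv hn hg hg0)]
  by_cases hm : Odd (n / g)
  · rw [if_pos hm]
    rw [Fintype.card_congr (Equiv.subtypeEquivRight (q := fun h => Odd (onesCount h))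
      (fun h => by rw [Nat.odd_mul]; simp [hm]))]
    exact card_odd_weight hg0
  · rw [if_neg hm]
    rw [Fintype.card_eq_zero_iff]
    exact ⟨fun x => hm (Nat.odd_mul.mp x.2).1⟩
end

lemma onesCount_comp {n : ℕ} (f : Fin n → Bool) (π : Equiv.Perm (Fin n)) :
    onesCount (f ∘ ⇑π) = onesCount f := by
  classical
  have c1 : ∀ (h : Fin n → Bool), onesCount h = Fintype.card {i // h i = true} := by
    intro h; rw [Fintype.card_subtype]; rfl
  rw [c1, c1]
  exact Fintype.card_congr (Equiv.subtypeEquiv π (fun i => Iff.rfl))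

abbrev NeckG (n : ℕ) : Subgroup (Equiv.Perm (Fin n)) := Subgroup.zpowers (finRotate n)

abbrev NeckX (n : ℕ) := {f : Fin n → Bool // Odd (onesCount f)}

instance neckAction (n : ℕ) : MulAction (NeckG n) (NeckX n) where
  smul γ f := ⟨f.1 ∘ ⇑(γ⁻¹).1, by rw [onesCount_comp]; exact f.2⟩
  one_smul f := by
    apply Subtype.ext
    show f.1 ∘ ⇑((1 : NeckG n)⁻¹).1 = f.1
    simp
  mul_smul γ δ f := by
    apply Subtype.ext
    show f.1 ∘ ⇑(((γ * δ)⁻¹).1) = (f.1 ∘ ⇑(δ⁻¹).1) ∘ ⇑(γ⁻¹).1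
    funext x
    simp [mul_inv_rev]

lemma neck_smul_def {n : ℕ} (γ : NeckG n) (f : NeckX n) :
    (γ • f).1 = f.1 ∘ ⇑(γ⁻¹).1 := rfl

instance neckG_cyclic (n : ℕ) : IsCyclic (NeckG n) := by
  refine ⟨⟨⟨finRotate n, Subgroup.mem_zpowers _⟩, ?_⟩⟩
  rintro ⟨x, hx⟩
  obtain ⟨m, hm⟩ := Subgroup.mem_zpowers_iff.mp hx
  exact ⟨m, Subtype.ext (by simpa using hm)⟩

lemma neck_rel_iff {n : ℕ} (hn : 2 ≤ n) (f g : NeckX n) :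
    necklaceRelOdd n f g ↔ (MulAction.orbitRel (NeckG n) (NeckX n)).r f g := by
  have hσn : 0 < n := by omega
  constructor
  · rintro ⟨k, hk⟩
    refine ⟨⟨(finRotate n) ^ k, Subgroup.pow_mem _ (Subgroup.mem_zpowers _) _⟩, ?_⟩
    apply Subtype.ext
    rw [neck_smul_def]
    funext x
    simp only [Function.comp_apply, hk]
    refine congrArg f.1 ?_
    show ((finRotate n) ^ k) (((finRotate n) ^ k)⁻¹ x) = x
    simp
  · rintro ⟨γ, hγ⟩
    obtain ⟨m, hm⟩ := Subgroup.mem_zpowers_iff.mp γ.2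
    set k : ℕ := (m % (n : ℤ)).toNat with hk
    have hord : (orderOf (finRotate n) : ℤ) = (n : ℤ) := by rw [orderOf_finRotate' hn]
    have hmk : (finRotate n) ^ (k : ℤ) = (finRotate n) ^ m := by
      rw [hk, Int.toNat_of_nonneg (Int.emod_nonneg m (by positivity)), ← hord,
        zpow_mod_orderOf]
    refine ⟨k, ?_⟩
    have hf : f.1 = g.1 ∘ ⇑(γ⁻¹).1 := by rw [← hγ, neck_smul_def]
    funext x
    rw [hf]
    simp only [Function.comp_apply]
    have hγ1 : γ.1 = (finRotate n) ^ (k : ℤ) := by rw [hmk, hm]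
    have hinner : (γ⁻¹).1 (((finRotate n) ^ k) x) = x := by
      have hco : (γ⁻¹).1 = (γ.1)⁻¹ := rfl
      rw [hco, hγ1]
      simp [← zpow_natCast]
    exact (congrArg g.1 hinner).symm

lemma card_fixedBy_s3 {n : ℕ} (hn : 2 ≤ n) (γ : NeckG n) :
    Nat.card (MulAction.fixedBy (NeckX n) γ)
      = if Odd (orderOf γ) then 2 ^ (n / orderOf γ - 1) else 0 := by
  classical
  obtain ⟨m, hm⟩ := Subgroup.mem_zpowers_iff.mp γ.2
  set k : ℕ := (m % (n : ℤ)).toNat with hk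
  have hord0 : (orderOf (finRotate n) : ℤ) = (n : ℤ) := by rw [orderOf_finRotate' hn]
  have hmk : (finRotate n) ^ (k : ℤ) = (finRotate n) ^ m := by
    rw [hk, Int.toNat_of_nonneg (Int.emod_nonneg m (by positivity)), ← hord0, zpow_mod_orderOf]
  have hγ1 : γ.1 = (finRotate n) ^ k := by
    rw [← hm, ← hmk, zpow_natCast]
  set g' : ℕ := Nat.gcd n k with hg'def
  have hg' : g' ∣ n := Nat.gcd_dvd_left n k
  have hg0 : 0 < g' := Nat.gcd_pos_of_pos_left k (by omega)
  have hord : orderOf γ = n / g' := by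
    rw [← Subgroup.orderOf_coe, hγ1, orderOf_pow, orderOf_finRotate' hn]
  have h2 : n / (n / g') = g' := Nat.div_div_self hg' (by omega)
  have hiff : ∀ x : NeckX n, (x ∈ MulAction.fixedBy (NeckX n) γ)
      ↔ x.1 ∘ ⇑((finRotate n) ^ g') = x.1 := by
    intro x
    rw [MulAction.mem_fixedBy, ← fixed_pow_iff_gcd hn]
    constructor
    · intro h
      have h3 := congrArg Subtype.val h
      rw [neck_smul_def] at h3
      funext y
      have h4 := congrFun h3 ((γ.1) y)
      simp only [Function.comp_apply] at h4 ⊢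
      have : (γ⁻¹).1 (γ.1 y) = y := by
        show (γ.1)⁻¹ (γ.1 y) = y
        simp
      rw [this] at h4
      rw [← hγ1]
      exact h4.symm
    · intro h
      apply Subtype.ext
      rw [neck_smul_def]
      funext y
      have h4 := congrFun h ((γ⁻¹).1 y)
      simp only [Function.comp_apply] at h4 ⊢
      rw [← hγ1] at h4
      have : γ.1 ((γ⁻¹).1 y) = y := by
        show γ.1 ((γ.1)⁻¹ y) = y
        simp
      rw [this] at h4
      exact h4.symm
  have e : ↥(MulAction.fixedBy (NeckX n) γ)
      ≃ {f : Fin n → Bool // Odd (onesCount f) ∧ f ∘ ⇑((finRotate n) ^ g') = f} :=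
    { toFun := fun x => ⟨x.1.1, x.1.2, (hiff x.1).mp x.2⟩,
      invFun := fun y => ⟨⟨y.1, y.2.1⟩, (hiff _).mpr y.2.2⟩,
      left_inv := fun x => rfl, right_inv := fun y => rfl }
  rw [Nat.card_congr e, Nat.card_eq_fintype_card, card_fixed hn hg' hg0, hord, h2]

theorem necklaces_with_odd_ones (n : ℕ) (hn : 2 ≤ n) (he : Even n) :
    2 * n * Nat.card (Quot (necklaceRelOdd n)) =
      ∑ d ∈ n.divisors.filter (fun d => Odd d), d.totient * 2 ^ (n / d) := by
  classical
  letI : ∀ γ : NeckG n, Fintype (MulAction.fixedBy (NeckX n) γ) := fun γ => Fintype.ofFinite _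
  letI : Fintype (Quotient (MulAction.orbitRel (NeckG n) (NeckX n))) := Fintype.ofFinite _
  have hq : Nat.card (Quot (necklaceRelOdd n))
      = Nat.card (Quotient (MulAction.orbitRel (NeckG n) (NeckX n))) :=
    Nat.card_congr (Quot.congrRight (fun a b => neck_rel_iff hn a b))
  have hb := MulAction.sum_card_fixedBy_eq_card_orbits_mul_card_group (NeckG n) (NeckX n)
  simp only [← Nat.card_eq_fintype_card] at hb
  have hcardG : Nat.card (NeckG n) = n := by
    rw [Nat.card_zpowers, orderOf_finRotate' hn]
  rw [hcardG] at hb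
  -- evaluate the sum
  have hmaps : ∀ γ : NeckG n, γ ∈ Finset.univ → orderOf γ ∈ n.divisors := by
    intro γ _
    rw [Nat.mem_divisors]
    refine ⟨?_, by omega⟩
    have := orderOf_dvd_card (x := γ)
    rwa [← Nat.card_eq_fintype_card, hcardG] at this
  have hsum : (∑ γ : NeckG n, Nat.card (MulAction.fixedBy (NeckX n) γ))
      = ∑ d ∈ n.divisors, d.totient * (if Odd d then 2 ^ (n / d - 1) else 0) := by
    rw [← Finset.sum_fiberwise_of_maps_to hmaps
      (fun γ => Nat.card (MulAction.fixedBy (NeckX n) γ))]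
    refine Finset.sum_congr rfl ?_
    intro d hd
    have : ∀ γ ∈ Finset.univ.filter (fun γ : NeckG n => orderOf γ = d),
        Nat.card (MulAction.fixedBy (NeckX n) γ)
          = (if Odd d then 2 ^ (n / d - 1) else 0) := by
      intro γ hγ
      rw [card_fixedBy_s3 hn γ, (Finset.mem_filter.mp hγ).2]
    rw [Finset.sum_congr rfl this, Finset.sum_const, smul_eq_mul]
    congr 1
    have hdvd : d ∣ Fintype.card (NeckG n) := by
      rw [← Nat.card_eq_fintype_card, hcardG]
      exact (Nat.mem_divisors.mp hd).1
    exact IsCyclic.card_orderOf_eq_totient hdvd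
  rw [hsum] at hb
  -- final arithmetic
  have hrhs : ∑ d ∈ n.divisors.filter (fun d => Odd d), d.totient * 2 ^ (n / d)
      = 2 * ∑ d ∈ n.divisors, d.totient * (if Odd d then 2 ^ (n / d - 1) else 0) := by
    rw [Finset.sum_filter, Finset.mul_sum]
    refine Finset.sum_congr rfl ?_
    intro d hd
    by_cases hodd : Odd d
    · rw [if_pos hodd, if_pos hodd]
      have hnd : 1 ≤ n / d := by
        obtain ⟨hdvd, hne⟩ := Nat.mem_divisors.mp hd
        have : 0 < d := Nat.pos_of_dvd_of_pos hdvd (by omega)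
        exact Nat.one_le_div_iff this |>.mpr (Nat.le_of_dvd (by omega) hdvd)
      have : (2 : ℕ) ^ (n / d) = 2 * 2 ^ (n / d - 1) := by
        conv_lhs => rw [show n / d = (n / d - 1) + 1 from by omega]
        rw [pow_succ']
      rw [this]
      ring
    · rw [if_neg hodd, if_neg hodd]
      ring
  rw [hrhs, hb, hq]
  ring
end

section
/- For even n, the identity Σ_{l=0}^{n/2} Σ_{d | gcd(2l,n)} φ(d)·C(n/d, 2l/d) = Σ_{d | n, 2 | d} φ(d)·2^{n/d} + Σ_{d | n, 2∤d} φ(d)·2^{n/d - 1} holds. -/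
open Finset

lemma even_filter_sum (m : ℕ) :
    ∑ j ∈ range (m / 2 + 1), m.choose (2 * j)
      = ∑ k ∈ (range (m + 1)).filter (fun k => Even k), m.choose k := by
  refine Finset.sum_nbij' (fun j => 2 * j) (fun k => k / 2) ?_ ?_ ?_ ?_ ?_
  · intro j hj
    simp only [mem_range] at hj
    simp only [mem_filter, mem_range]
    exact ⟨by omega, ⟨j, by ring⟩⟩
  · intro k hk
    simp only [mem_filter, mem_range] at hk
    obtain ⟨hk1, j, rfl⟩ := hk
    simp only [mem_range]; omega
  · intro j hj; omega
  · intro k hk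
    simp only [mem_filter, mem_range] at hk
    obtain ⟨hk1, j, rfl⟩ := hk
    omega
  · intros; rfl

lemma sum_choose_even (m : ℕ) (hm : 0 < m) :
    ∑ j ∈ range (m / 2 + 1), m.choose (2 * j) = 2 ^ (m - 1) := by
  have key : (2 : ℤ) * ∑ j ∈ range (m / 2 + 1), (m.choose (2 * j) : ℤ) = 2 ^ m := by
    have hb : ∑ j ∈ range (m / 2 + 1), (m.choose (2 * j) : ℤ)
        = ∑ k ∈ (range (m + 1)).filter (fun k => Even k), (m.choose k : ℤ) := by
      exact_mod_cast congrArg (Nat.cast : ℕ → ℤ) (even_filter_sum m)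
    rw [hb]
    have h1 : ∑ k ∈ range (m + 1), ((m.choose k : ℤ) + (-1) ^ k * m.choose k)
        = 2 ^ m := by
      rw [Finset.sum_add_distrib, Int.alternating_sum_range_choose_of_ne hm.ne', add_zero]
      exact_mod_cast congrArg (Nat.cast : ℕ → ℤ) (Nat.sum_range_choose m)
    rw [← h1, ← Finset.sum_filter_add_sum_filter_not (range (m+1)) (fun k => Even k)
      (fun k => (m.choose k : ℤ) + (-1) ^ k * m.choose k)]
    have h2 : ∑ k ∈ (range (m+1)).filter (fun k => Even k),
        ((m.choose k : ℤ) + (-1) ^ k * m.choose k)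
        = 2 * ∑ k ∈ (range (m+1)).filter (fun k => Even k), (m.choose k : ℤ) := by
      rw [Finset.mul_sum]
      refine Finset.sum_congr rfl fun k hk => ?_
      simp only [mem_filter] at hk
      rw [hk.2.neg_one_pow]; ring
    have h3 : ∑ k ∈ (range (m+1)).filter (fun k => ¬ Even k),
        ((m.choose k : ℤ) + (-1) ^ k * m.choose k) = 0 := by
      refine Finset.sum_eq_zero fun k hk => ?_
      simp only [mem_filter] at hk
      rw [(Nat.not_even_iff_odd.mp hk.2).neg_one_pow]; ring
    rw [h2, h3, add_zero]
  have : (2:ℤ) ^ m = 2 * 2 ^ (m-1) := by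
    rw [← pow_succ']; congr 1; omega
  rw [this] at key
  have := mul_left_cancel₀ (by norm_num : (2:ℤ) ≠ 0) key
  exact_mod_cast this

lemma sum_filter_dvd (N e : ℕ) (he : 0 < e) (f : ℕ → ℕ) :
    ∑ l ∈ (range (N + 1)).filter (fun l => e ∣ l), f l
      = ∑ j ∈ range (N / e + 1), f (e * j) := by
  refine (Finset.sum_nbij' (fun j => e * j) (fun l => l / e) ?_ ?_ ?_ ?_ ?_).symm
  · intro j hj
    simp only [mem_range] at hj
    simp only [mem_filter, mem_range]
    refine ⟨?_, Dvd.intro j rfl⟩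
    have : e * j ≤ e * (N / e) := Nat.mul_le_mul_left e (by omega)
    have h2 := Nat.mul_div_le N e
    omega
  · intro l hl
    simp only [mem_filter, mem_range] at hl
    simp only [mem_range]
    have := Nat.div_le_div_right (c := e) (Nat.lt_succ_iff.mp hl.1)
    omega
  · intro j hj; exact Nat.mul_div_cancel_left j he
  · intro l hl
    simp only [mem_filter, mem_range] at hl
    exact Nat.mul_div_cancel' hl.2
  · intros; rfl

theorem even_ones_sum_identity (n : ℕ) (hn : 0 < n) (he : Even n) :
    ∑ l ∈ Finset.range (n / 2 + 1),
        ∑ d ∈ (Nat.gcd (2 * l) n).divisors, d.totient * Nat.choose (n / d) (2 * l / d) =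
      (∑ d ∈ n.divisors.filter (fun d => 2 ∣ d), d.totient * 2 ^ (n / d)) +
      (∑ d ∈ n.divisors.filter (fun d => ¬ 2 ∣ d), d.totient * 2 ^ (n / d - 1)) := by
  have hdiv : ∀ l, (Nat.gcd (2 * l) n).divisors
      = n.divisors.filter (fun d => d ∣ 2 * l) := by
    intro l
    ext d
    simp only [Nat.mem_divisors, Nat.dvd_gcd_iff, mem_filter]
    constructor
    · rintro ⟨⟨h1, h2⟩, -⟩; exact ⟨⟨h2, hn.ne'⟩, h1⟩
    · rintro ⟨⟨h2, -⟩, h1⟩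
      refine ⟨⟨h1, h2⟩, fun hg => hn.ne' ?_⟩
      simpa using (Nat.gcd_eq_zero_iff.mp hg).2
  calc
    ∑ l ∈ Finset.range (n / 2 + 1),
        ∑ d ∈ (Nat.gcd (2 * l) n).divisors, d.totient * Nat.choose (n / d) (2 * l / d)
      = ∑ l ∈ Finset.range (n / 2 + 1), ∑ d ∈ n.divisors,
          if d ∣ 2 * l then d.totient * Nat.choose (n / d) (2 * l / d) else 0 := by
        simp only [hdiv, Finset.sum_filter]
    _ = ∑ d ∈ n.divisors, ∑ l ∈ Finset.range (n / 2 + 1),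
          if d ∣ 2 * l then d.totient * Nat.choose (n / d) (2 * l / d) else 0 :=
        Finset.sum_comm
    _ = (∑ d ∈ n.divisors.filter (fun d => 2 ∣ d), ∑ l ∈ Finset.range (n / 2 + 1),
          (if d ∣ 2 * l then d.totient * Nat.choose (n / d) (2 * l / d) else 0)) +
        (∑ d ∈ n.divisors.filter (fun d => ¬ 2 ∣ d), ∑ l ∈ Finset.range (n / 2 + 1),
          (if d ∣ 2 * l then d.totient * Nat.choose (n / d) (2 * l / d) else 0)) :=
        (Finset.sum_filter_add_sum_filter_not _ _ _).symm
    _ = (∑ d ∈ n.divisors.filter (fun d => 2 ∣ d), d.totient * 2 ^ (n / d)) +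
        (∑ d ∈ n.divisors.filter (fun d => ¬ 2 ∣ d), d.totient * 2 ^ (n / d - 1)) := by
        congr 1
        · refine Finset.sum_congr rfl fun d hd => ?_
          simp only [mem_filter, Nat.mem_divisors] at hd
          obtain ⟨⟨hdn, -⟩, e, rfl⟩ := hd
          have hdpos : 0 < 2 * e := Nat.pos_of_dvd_of_pos hdn hn
          have hepos : 0 < e := by omega
          have hcond : ∀ l, (2 * e ∣ 2 * l) ↔ e ∣ l := fun l =>
            Nat.mul_dvd_mul_iff_left (by norm_num : 0 < 2)
          simp only [mul_comm 2 e] at hcond ⊢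
          calc
            ∑ l ∈ Finset.range (n / 2 + 1),
                (if e * 2 ∣ 2 * l then (e * 2).totient * Nat.choose (n / (e * 2)) (2 * l / (e * 2)) else 0)
              = ∑ l ∈ (Finset.range (n / 2 + 1)).filter (fun l => e ∣ l),
                  (e * 2).totient * Nat.choose (n / (e * 2)) (2 * l / (e * 2)) := by
                rw [← Finset.sum_filter]
                congr 1
                ext l
                simp [hcond l]
            _ = ∑ j ∈ range (n / 2 / e + 1),
                  (e * 2).totient * Nat.choose (n / (e * 2)) (2 * (e * j) / (e * 2)) :=
                sum_filter_dvd (n / 2) e hepos _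
            _ = (e * 2).totient * 2 ^ (n / (e * 2)) := by
                have h1 : n / 2 / e = n / (e * 2) := by
                  rw [Nat.div_div_eq_div_mul, mul_comm]
                have h2 : ∀ j, 2 * (e * j) / (e * 2) = j := by
                  intro j
                  rw [show 2 * (e * j) = (e * 2) * j by ring,
                    Nat.mul_div_cancel_left j (by omega)]
                simp only [h1, h2, ← Finset.mul_sum, Nat.sum_range_choose]
        · refine Finset.sum_congr rfl fun d hd => ?_
          simp only [mem_filter, Nat.mem_divisors] at hd
          obtain ⟨⟨hdn, -⟩, hodd⟩ := hd
          have hdpos : 0 < d := Nat.pos_of_dvd_of_pos hdn hn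
          have hcop : Nat.Coprime d 2 :=
            Nat.coprime_two_right.mpr (Nat.odd_iff.mpr (by omega))
          have hcond : ∀ l, (d ∣ 2 * l) ↔ d ∣ l := by
            intro l
            constructor
            · exact fun h => (Nat.Coprime.dvd_of_dvd_mul_left hcop) h
            · exact fun h => h.mul_left 2
          calc
            ∑ l ∈ Finset.range (n / 2 + 1),
                (if d ∣ 2 * l then d.totient * Nat.choose (n / d) (2 * l / d) else 0)
              = ∑ l ∈ (Finset.range (n / 2 + 1)).filter (fun l => d ∣ l),
                  d.totient * Nat.choose (n / d) (2 * l / d) := by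
                rw [← Finset.sum_filter]
                congr 1
                ext l
                simp [hcond l]
            _ = ∑ j ∈ range (n / 2 / d + 1),
                  d.totient * Nat.choose (n / d) (2 * (d * j) / d) :=
                sum_filter_dvd (n / 2) d hdpos _
            _ = d.totient * 2 ^ (n / d - 1) := by
                have h1 : n / 2 / d = n / d / 2 := by
                  rw [Nat.div_div_eq_div_mul, Nat.div_div_eq_div_mul, mul_comm]
                have h2 : ∀ j, 2 * (d * j) / d = 2 * j := by
                  intro j
                  rw [show 2 * (d * j) = d * (2 * j) by ring,
                    Nat.mul_div_cancel_left _ hdpos]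
                have hmpos : 0 < n / d := Nat.div_pos (Nat.le_of_dvd hn hdn) hdpos
                simp only [h1, h2, ← Finset.mul_sum]
                rw [sum_choose_even (n / d) hmpos]
end

section
/- For even n ≥ 4, every path in the binary necklace graph NG(n) contains at most BPL(n) = (1/n)·Σ_{d | n, d odd} φ(d)·2^{n/d} + 1 vertices. -/
/-- De Bruijn arc: `g i = f (i+1)` for all `i < n - 1`. -/
def dBArc (n : ℕ) (f g : Fin n → Bool) : Prop :=
  ∀ i : Fin n, (h : i.val + 1 < n) → g i = f ⟨i.val + 1, h⟩

/-- The necklace graph on rotation classes of binary strings of length `n`. -/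
def NG (n : ℕ) : SimpleGraph (Quot (necklaceRel n)) where
  Adj X Y := X ≠ Y ∧ ∃ f g : Fin n → Bool,
    Quot.mk _ f = X ∧ Quot.mk _ g = Y ∧ (dBArc n f g ∨ dBArc n g f)
  symm := by
    constructor
    rintro X Y ⟨hne, f, g, hf, hg, h⟩
    exact ⟨hne.symm, g, f, hg, hf, h.symm⟩
  loopless := by constructor; rintro X ⟨hne, -⟩; exact hne rfl

/-- The upper bound on the number of vertices of a path in `NG n` for even `n`. -/
def BPL (n : ℕ) : ℕ :=
  (∑ d ∈ n.divisors.filter (fun d => Odd d), d.totient * 2 ^ (n / d)) / n + 1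

namespace NGAux

open Fin.CommRing

/-! ### Weights -/

def wt {N : ℕ} (f : Fin N → Bool) : ℕ := (Finset.univ.filter fun i => f i = true).card

lemma wt_comp_equiv {N : ℕ} (f : Fin N → Bool) (e : Equiv.Perm (Fin N)) : wt (f ∘ e) = wt f := by
  unfold wt
  apply Finset.card_bij (fun a _ => e a)
  · intro a ha
    simp only [Finset.mem_filter, Finset.mem_univ, true_and, Function.comp] at ha ⊢
    exact ha
  · intro a _ b _ h; exact e.injective h
  · intro b hb
    simp only [Finset.mem_filter, Finset.mem_univ, true_and, Function.comp] at hb ⊢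
    exact ⟨e.symm b, by simpa using hb, by simp⟩

lemma wt_sum {N : ℕ} (f : Fin N → Bool) : wt f = ∑ i : Fin N, if f i = true then 1 else 0 :=
  Finset.card_filter _ _

lemma pow_finRotate_apply (m k : ℕ) (i : Fin (m+1)) :
    ((finRotate (m+1)) ^ k) i = i + (k : Fin (m+1)) := by
  induction k generalizing i with
  | zero => simp
  | succ k ih =>
    rw [pow_succ, Equiv.Perm.mul_apply, finRotate_succ_apply, ih (i + 1)]
    push_cast
    ring

lemma necklaceRel_iff (m : ℕ) (f g : Fin (m+1) → Bool) :
    necklaceRel (m+1) f g ↔ ∃ k : ℕ, g = fun i => f (i + (k : Fin (m+1))) := by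
  constructor
  · rintro ⟨k, rfl⟩
    exact ⟨k, funext fun i => by simp [Function.comp, pow_finRotate_apply]⟩
  · rintro ⟨k, rfl⟩
    exact ⟨k, funext fun i => by simp [Function.comp, pow_finRotate_apply]⟩

lemma wt_of_rel {m : ℕ} {f g : Fin (m+1) → Bool} (h : necklaceRel (m+1) f g) : wt g = wt f := by
  obtain ⟨k, rfl⟩ := h
  exact wt_comp_equiv f _

noncomputable def parB (m : ℕ) : Quot (necklaceRel (m+1)) → Bool :=
  Quot.lift (fun f => decide (Odd (wt f))) (fun f g h => by simp [wt_of_rel h])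

lemma parB_mk {m : ℕ} (f : Fin (m+1) → Bool) :
    parB m (Quot.mk _ f) = true ↔ Odd (wt f) := by
  simp [parB]

/-! ### Parity flip for one-point modifications -/

lemma odd_wt_flip {N : ℕ} (f g : Fin N → Bool) (a : Fin N) (hne : g a ≠ f a)
    (hag : ∀ i, i ≠ a → g i = f i) : Odd (wt g) ↔ ¬ Odd (wt f) := by
  classical
  have hga : g a = ! f a := by revert hne; cases hfa : f a <;> cases hgb : g a <;> simp
  unfold wt
  rcases hfa : f a with _ | _
  · have hset : (Finset.univ.filter fun i => g i = true)
        = insert a (Finset.univ.filter fun i => f i = true) := by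
      ext i
      by_cases hi : i = a
      · subst hi; simp [hga, hfa]
      · simp [hag i hi, hi]
    have hmem : a ∉ (Finset.univ.filter fun i => f i = true) := by simp [hfa]
    rw [hset, Finset.card_insert_of_notMem hmem, Nat.odd_iff, Nat.odd_iff]
    omega
  · have hset : (Finset.univ.filter fun i => g i = true)
        = (Finset.univ.filter fun i => f i = true).erase a := by
      ext i
      by_cases hi : i = a
      · subst hi; simp [hga, hfa]
      · simp [hag i hi, hi]
    have hmem : a ∈ (Finset.univ.filter fun i => f i = true) := by simp [hfa]
    have hcard := Finset.card_erase_of_mem hmem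
    have hpos : 1 ≤ (Finset.univ.filter fun i => f i = true).card :=
      Finset.card_pos.mpr ⟨a, hmem⟩
    rw [hset, hcard, Nat.odd_iff, Nat.odd_iff]
    omega

/-! ### Bipartiteness -/

lemma dBArc_parity {m : ℕ} {f g : Fin (m+1) → Bool} (harc : dBArc (m+1) f g)
    (hne : Quot.mk (necklaceRel (m+1)) f ≠ Quot.mk (necklaceRel (m+1)) g) :
    Odd (wt g) ↔ ¬ Odd (wt f) := by
  classical
  set f' : Fin (m+1) → Bool := f ∘ ⇑(finRotate (m+1)) with hf'
  have hwt : wt f' = wt f := wt_comp_equiv f _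
  set a : Fin (m+1) := ⟨m, Nat.lt_succ_self m⟩ with ha
  have hag : ∀ i : Fin (m+1), i ≠ a → g i = f' i := by
    intro i hi
    have hlt : i.val + 1 < m + 1 := by
      have : i.val ≠ m := fun h => hi (Fin.ext h)
      omega
    have hlast : i < Fin.last m := by
      rw [Fin.lt_iff_val_lt_val]
      simp only [Fin.val_last]
      omega
    have h1 : (i + 1 : Fin (m+1)) = ⟨i.val + 1, hlt⟩ :=
      Fin.ext (Fin.val_add_one_of_lt hlast)
    rw [harc i hlt, hf']
    simp [finRotate_succ_apply, h1]
  by_cases hga : g a = f' a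
  · exfalso
    apply hne
    apply Quot.sound
    refine ⟨1, ?_⟩
    rw [pow_one]
    funext i
    by_cases hi : i = a
    · subst hi; exact hga
    · exact hag i hi
  · rw [← hwt]
    exact odd_wt_flip f' g a hga hag

lemma adj_parB (m : ℕ) {X Y : Quot (necklaceRel (m+1))} (h : (NG (m+1)).Adj X Y) :
    parB m X ≠ parB m Y := by
  obtain ⟨hne, f, g, hf, hg, harc⟩ := h
  subst hf; subst hg
  rcases harc with harc | harc
  · have hiff := dBArc_parity harc hne
    intro hEq
    simp only [parB] at hEq
    rw [decide_eq_decide] at hEq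
    tauto
  · have hiff := dBArc_parity harc hne.symm
    intro hEq
    simp only [parB] at hEq
    rw [decide_eq_decide] at hEq
    tauto

/-! ### Alternating chains -/

lemma chain_length_le {V : Type*} (c : V → Bool) :
    ∀ l : List V, List.Chain' (fun a b => c a ≠ c b) l →
      l.length ≤ 2 * (l.filter (fun v => c v)).length + 1
  | [] => by simp
  | [a] => by intro _; simp
  | a :: b :: t => by
    intro h
    have hc : c a ≠ c b := (List.isChain_cons_cons.mp h).1
    have ht : List.Chain' (fun a b => c a ≠ c b) t := ((List.isChain_cons_cons.mp h).2).tail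
    have ih := chain_length_le c t ht
    have hfil : ((a :: b :: t).filter (fun v => c v)).length
        = (t.filter (fun v => c v)).length + 1 := by
      rcases hca : c a with _ | _ <;> rcases hcb : c b with _ | _ <;>
        simp_all [List.filter_cons]
    simp only [List.length_cons, hfil]
    omega

/-! ### Periodicity -/

variable {m : ℕ}

lemma period_mul {f : Fin (m+1) → Bool} {j : ℕ} (hf : ∀ i, f (i + (j : Fin (m+1))) = f i) :
    ∀ (t : ℕ) (i : Fin (m+1)), f (i + ((j * t : ℕ) : Fin (m+1))) = f i := by
  intro t
  induction t with
  | zero => simp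
  | succ t ih =>
    intro i
    have h1 : ((j * (t+1) : ℕ) : Fin (m+1)) = ((j * t : ℕ) : Fin (m+1)) + (j : Fin (m+1)) := by
      push_cast; ring
    have h2 : i + (((j * t : ℕ) : Fin (m+1)) + (j : Fin (m+1)))
        = (i + (j : Fin (m+1))) + ((j * t : ℕ) : Fin (m+1)) := by ring
    rw [h1, h2, ih (i + (j : Fin (m+1))), hf i]

lemma gcd_cast_mem (k : Fin (m+1)) :
    ∃ t : ℕ, ((k.val * t : ℕ) : Fin (m+1)) = ((Nat.gcd (m+1) k.val : ℕ) : Fin (m+1)) := by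
  have hz := Nat.gcd_eq_gcd_ab (m+1) k.val
  have hcast : ((Nat.gcd (m+1) k.val : ℤ) : Fin (m+1))
      = (((m+1 : ℕ) : ℤ) : Fin (m+1)) * ((Nat.gcdA (m+1) k.val : ℤ) : Fin (m+1))
      + ((k.val : ℤ) : Fin (m+1)) * ((Nat.gcdB (m+1) k.val : ℤ) : Fin (m+1)) := by
    rw [hz]; push_cast; ring
  simp only [Int.cast_natCast, Fin.natCast_self, zero_mul, zero_add] at hcast
  set b : Fin (m+1) := ((Nat.gcdB (m+1) k.val : ℤ) : Fin (m+1)) with hb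
  refine ⟨b.val, ?_⟩
  have h3 : ((k.val * b.val : ℕ) : Fin (m+1))
      = ((k.val : ℕ) : Fin (m+1)) * ((b.val : ℕ) : Fin (m+1)) := by
    push_cast; ring
  rw [h3, Fin.cast_val_eq_self b]
  exact hcast.symm

lemma fixed_iff_gcd {f : Fin (m+1) → Bool} {k : Fin (m+1)} :
    (∀ i, f (i + k) = f i) ↔
      (∀ i, f (i + ((Nat.gcd (m+1) k.val : ℕ) : Fin (m+1))) = f i) := by
  constructor
  · intro hf
    have hf' : ∀ i, f (i + ((k.val : ℕ) : Fin (m+1))) = f i := by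
      intro i; rw [Fin.cast_val_eq_self k]; exact hf i
    obtain ⟨t, ht⟩ := gcd_cast_mem k
    intro i
    rw [← ht]
    exact period_mul hf' t i
  · intro hf
    obtain ⟨c, hc⟩ := Nat.gcd_dvd_right (m+1) k.val
    intro i
    have := period_mul hf c i
    rw [← hc, Fin.cast_val_eq_self k] at this
    exact this

lemma fixed_mod {f : Fin (m+1) → Bool} {d : ℕ}
    (hf : ∀ i, f (i + (d : Fin (m+1))) = f i) (a : ℕ) :
    f ((a : ℕ) : Fin (m+1)) = f ((a % d : ℕ) : Fin (m+1)) := by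
  conv_lhs => rw [show ((a : ℕ) : Fin (m+1))
      = ((a % d : ℕ) : Fin (m+1)) + ((d * (a / d) : ℕ) : Fin (m+1)) by
    rw [← Nat.cast_add, Nat.mod_add_div]]
  exact period_mul hf (a / d) _

def res (d : ℕ) (f : Fin (m+1) → Bool) : Fin d → Bool :=
  fun r => f ((r.val : ℕ) : Fin (m+1))

def ext (d : ℕ) (hd0 : 0 < d) (F : Fin d → Bool) : Fin (m+1) → Bool :=
  fun i => F ⟨i.val % d, Nat.mod_lt _ hd0⟩

lemma wt_of_periodic {f : Fin (m+1) → Bool} {d : ℕ} (hd : d ∣ (m+1))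
    (hf : ∀ i, f (i + (d : Fin (m+1))) = f i) :
    wt f = ((m+1)/d) * wt (res d f) := by
  have hd0 : 0 < d := Nat.pos_of_dvd_of_pos hd (Nat.succ_pos m)
  have hqd : ((m+1)/d) * d = m+1 := Nat.div_mul_cancel hd
  set e : Fin ((m+1)/d) × Fin d ≃ Fin (m+1) := finProdFinEquiv.trans (finCongr hqd) with he
  rw [wt_sum, ← Equiv.sum_comp e (fun i => if f i = true then 1 else 0)]
  have hval : ∀ (p : Fin ((m+1)/d) × Fin d), f (e p) = f ((p.2.val : ℕ) : Fin (m+1)) := by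
    rintro ⟨t, r⟩
    have h1 : (e (t, r)) = ((r.val + d * t.val : ℕ) : Fin (m+1)) := by
      apply Fin.ext
      rw [Fin.val_natCast]
      simp only [he, Equiv.trans_apply, finCongr_apply, Fin.coe_cast]
      show (r.val + d * t.val) = (r.val + d * t.val) % (m+1)
      have hlt : r.val + d * t.val < m + 1 := by
        calc r.val + d * t.val < d + d * t.val := by omega
          _ = d * (t.val + 1) := by ring
          _ ≤ d * ((m+1)/d) := Nat.mul_le_mul_left d t.isLt
          _ = m + 1 := by rw [mul_comm]; exact hqd
      exact (Nat.mod_eq_of_lt hlt).symm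
    rw [h1, fixed_mod hf, Nat.add_mul_mod_self_left, Nat.mod_eq_of_lt r.isLt]
  calc ∑ p : Fin ((m+1)/d) × Fin d, (if f (e p) = true then 1 else 0)
      = ∑ p : Fin ((m+1)/d) × Fin d,
          (if f ((p.2.val : ℕ) : Fin (m+1)) = true then 1 else 0) := by
        apply Finset.sum_congr rfl; intro p _; rw [hval p]
    _ = ∑ _t : Fin ((m+1)/d), ∑ r : Fin d,
          (if f ((r.val : ℕ) : Fin (m+1)) = true then 1 else 0) := by
        rw [Fintype.sum_prod_type]
    _ = ((m+1)/d) * wt (res d f) := by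
        rw [Finset.sum_const, Finset.card_univ, Fintype.card_fin, smul_eq_mul, wt_sum]
        rfl

lemma odd_wt_periodic_iff {f : Fin (m+1) → Bool} {d : ℕ} (hd : d ∣ (m+1))
    (hf : ∀ i, f (i + (d : Fin (m+1))) = f i) :
    Odd (wt f) ↔ Odd ((m+1)/d) ∧ Odd (wt (res d f)) := by
  rw [wt_of_periodic hd hf, Nat.odd_mul]

/-! ### Counting odd-weight functions -/

lemma card_odd_fun (d : ℕ) (hd0 : 0 < d) :
    Fintype.card {F : Fin d → Bool // Odd (wt F)} = 2 ^ (d - 1) := by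
  classical
  rw [Fintype.card_subtype]
  set a0 : Fin d := ⟨0, hd0⟩
  set A := Finset.univ.filter (fun F : Fin d → Bool => Odd (wt F)) with hA
  set B := Finset.univ.filter (fun F : Fin d → Bool => ¬ Odd (wt F)) with hB
  have flip_mem : ∀ (F : Fin d → Bool),
      Odd (wt (Function.update F a0 (!F a0))) ↔ ¬ Odd (wt F) := by
    intro F
    apply odd_wt_flip
    · rw [Function.update_self]
      cases F a0 <;> simp
    · intro i hi; rw [Function.update_of_ne hi]
  have hcardAB : A.card = B.card := by
    apply Finset.card_bij (fun F _ => Function.update F a0 (!F a0))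
    · intro F hF
      simp only [hA, hB, Finset.mem_filter, Finset.mem_univ, true_and] at hF ⊢
      intro hodd
      exact ((flip_mem F).mp hodd) hF
    · intro F1 h1 F2 h2 heq
      funext i
      by_cases hi : i = a0
      · have h := congrFun heq a0
        rw [Function.update_self, Function.update_self] at h
        rw [hi]
        cases h1' : F1 a0 <;> cases h2' : F2 a0 <;> simp_all
      · have h := congrFun heq i
        rwa [Function.update_of_ne hi, Function.update_of_ne hi] at h
    · intro G hG
      simp only [hB, Finset.mem_filter, Finset.mem_univ, true_and] at hG
      refine ⟨Function.update G a0 (!G a0), ?_, ?_⟩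
      · simp only [hA, Finset.mem_filter, Finset.mem_univ, true_and]
        exact (flip_mem G).mpr hG
      · funext i
        by_cases hi : i = a0
        · rw [hi, Function.update_self, Function.update_self]
          cases G a0 <;> simp
        · rw [Function.update_of_ne hi, Function.update_of_ne hi]
  have hsum : A.card + B.card = 2 ^ d := by
    rw [hA, hB, Finset.card_filter_add_card_filter_not, Finset.card_univ,
      Fintype.card_fun, Fintype.card_bool, Fintype.card_fin]
  have h2 : 2 ^ d = 2 * 2 ^ (d - 1) := by
    rw [← pow_succ']
    congr 1
    omega
  omega

/-! ### The additive action and Burnside -/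

abbrev OddF (m : ℕ) : Type := {f : Fin (m+1) → Bool // Odd (wt f)}

instance : AddAction (Fin (m+1)) (OddF m) where
  vadd k f := ⟨fun i => f.1 (i + k), by
    have h : (fun i => f.1 (i + k)) = f.1 ∘ ⇑(Equiv.addRight k) := rfl
    rw [h, wt_comp_equiv]
    exact f.2⟩
  zero_vadd f := Subtype.ext (funext fun i => by
    show f.1 (i + 0) = f.1 i
    rw [add_zero])
  add_vadd a b f := Subtype.ext (funext fun i => by
    show f.1 (i + (a + b)) = f.1 ((i + a) + b)
    rw [add_assoc])

lemma mem_fixedBy_iff {k : Fin (m+1)} {f : OddF m} :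
    f ∈ AddAction.fixedBy (OddF m) k ↔ ∀ i, f.1 (i + k) = f.1 i := by
  constructor
  · intro h i
    exact congrFun (congrArg Subtype.val h) i
  · intro h
    exact Subtype.ext (funext h)

lemma val_add_cast_mod (i : Fin (m+1)) {d : ℕ} (hdvd : d ∣ (m+1)) :
    ((i + (d : Fin (m+1))).val) % d = i.val % d := by
  rw [Fin.val_add, Fin.val_natCast, Nat.mod_mod_of_dvd _ hdvd, Nat.add_mod,
    Nat.mod_mod_of_dvd d hdvd, Nat.mod_self, add_zero, Nat.mod_mod_of_dvd _ (dvd_refl d)]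

lemma card_fixedBy (k : Fin (m+1)) [inst : Fintype (AddAction.fixedBy (OddF m) k)] :
    Fintype.card (AddAction.fixedBy (OddF m) k) =
      if Odd ((m+1) / Nat.gcd (m+1) k.val) then 2 ^ (Nat.gcd (m+1) k.val - 1) else 0 := by
  classical
  set d := Nat.gcd (m+1) k.val with hd
  have hdvd : d ∣ (m+1) := Nat.gcd_dvd_left _ _
  have hd0 : 0 < d := Nat.gcd_pos_of_pos_left _ (Nat.succ_pos m)
  have hext_per : ∀ F : Fin d → Bool, ∀ i, ext d hd0 F (i + (d : Fin (m+1))) = ext d hd0 F i := by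
    intro F i
    show F ⟨(i + (d : Fin (m+1))).val % d, _⟩ = F ⟨i.val % d, _⟩
    congr 1
    exact Fin.ext (val_add_cast_mod i hdvd)
  have hres_ext : ∀ F : Fin d → Bool, res (m := m) d (ext (m := m) d hd0 F) = F := by
    intro F
    funext r
    show F ⟨((r.val : ℕ) : Fin (m+1)).val % d, _⟩ = F r
    congr 1
    apply Fin.ext
    show ((r.val : ℕ) : Fin (m+1)).val % d = r.val
    rw [Fin.val_natCast, Nat.mod_mod_of_dvd _ hdvd, Nat.mod_eq_of_lt r.isLt]
  by_cases hodd : Odd ((m+1)/d)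
  · rw [if_pos hodd, ← card_odd_fun d hd0]
    apply Fintype.card_congr
    refine
      { toFun := fun x => ⟨res d x.1.1, ?_⟩
        invFun := fun F => ⟨⟨ext d hd0 F.1, ?_⟩, ?_⟩
        left_inv := ?_
        right_inv := ?_ }
    · have hper := fixed_iff_gcd.mp (mem_fixedBy_iff.mp x.2)
      exact ((odd_wt_periodic_iff hdvd hper).mp x.1.2).2
    · rw [odd_wt_periodic_iff hdvd (hext_per F.1), hres_ext F.1]
      exact ⟨hodd, F.2⟩
    · exact mem_fixedBy_iff.mpr (fixed_iff_gcd.mpr (hext_per F.1))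
    · intro x
      apply Subtype.ext
      apply Subtype.ext
      funext i
      have hper := fixed_iff_gcd.mp (mem_fixedBy_iff.mp x.2)
      show x.1.1 ((i.val % d : ℕ) : Fin (m+1)) = x.1.1 i
      rw [← fixed_mod hper i.val, Fin.cast_val_eq_self]
    · intro F
      exact Subtype.ext (hres_ext F.1)
  · rw [if_neg hodd, Fintype.card_eq_zero_iff]
    refine ⟨fun x => ?_⟩
    have hper := fixed_iff_gcd.mp (mem_fixedBy_iff.mp x.2)
    exact hodd ((odd_wt_periodic_iff hdvd hper).mp x.1.2).1

set_option maxHeartbeats 1000000 in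
lemma orbit_count (m : ℕ)
    [Fintype (Quotient (AddAction.orbitRel (Fin (m+1)) (OddF m)))] :
    Fintype.card (Quotient (AddAction.orbitRel (Fin (m+1)) (OddF m))) * (m+1)
      = ∑ d ∈ (m+1).divisors.filter (fun d => Odd d), d.totient * 2 ^ ((m+1)/d - 1) := by
  classical
  letI : ∀ a : Fin (m+1), Fintype (AddAction.fixedBy (OddF m) a) := fun _ => Fintype.ofFinite _
  have hb := AddAction.sum_card_fixedBy_eq_card_orbits_mul_card_addGroup (Fin (m+1)) (OddF m)
  rw [Fintype.card_fin] at hb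
  rw [← hb]
  calc ∑ k : Fin (m+1), Fintype.card (AddAction.fixedBy (OddF m) k)
      = ∑ k : Fin (m+1), (fun j => if Odd ((m+1) / Nat.gcd (m+1) j)
          then 2 ^ (Nat.gcd (m+1) j - 1) else 0) k.val :=
        Finset.sum_congr rfl (fun k _ => card_fixedBy k)
    _ = ∑ j ∈ Finset.range (m+1), (if Odd ((m+1) / Nat.gcd (m+1) j)
          then 2 ^ (Nat.gcd (m+1) j - 1) else 0) :=
        Fin.sum_univ_eq_sum_range
          (fun j => if Odd ((m+1) / Nat.gcd (m+1) j) then 2 ^ (Nat.gcd (m+1) j - 1) else 0) (m+1)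
    _ = ∑ d ∈ (m+1).divisors, ∑ j ∈ (Finset.range (m+1)).filter (fun j => Nat.gcd (m+1) j = d),
          (if Odd ((m+1) / Nat.gcd (m+1) j) then 2 ^ (Nat.gcd (m+1) j - 1) else 0) :=
        (Finset.sum_fiberwise_of_maps_to
          (fun j _ => Nat.mem_divisors.mpr ⟨Nat.gcd_dvd_left _ _, Nat.succ_ne_zero m⟩) _).symm
    _ = ∑ d ∈ (m+1).divisors, Nat.totient ((m+1)/d) * (if Odd ((m+1) / d)
          then 2 ^ (d - 1) else 0) := by
        apply Finset.sum_congr rfl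
        intro d hd
        calc ∑ j ∈ (Finset.range (m+1)).filter (fun j => Nat.gcd (m+1) j = d),
              (if Odd ((m+1) / Nat.gcd (m+1) j) then 2 ^ (Nat.gcd (m+1) j - 1) else 0)
            = ∑ _j ∈ (Finset.range (m+1)).filter (fun j => Nat.gcd (m+1) j = d),
              (if Odd ((m+1) / d) then 2 ^ (d - 1) else 0) := by
              apply Finset.sum_congr rfl
              intro j hj
              rw [(Finset.mem_filter.mp hj).2]
          _ = ((Finset.range (m+1)).filter (fun j => Nat.gcd (m+1) j = d)).card
              * (if Odd ((m+1) / d) then 2 ^ (d - 1) else 0) := by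
              rw [Finset.sum_const, smul_eq_mul]
          _ = Nat.totient ((m+1)/d) * (if Odd ((m+1) / d) then 2 ^ (d - 1) else 0) := by
              rw [← Nat.totient_div_of_dvd (Nat.dvd_of_mem_divisors hd)]
    _ = ∑ d ∈ (m+1).divisors, (fun x => Nat.totient x * (if Odd x
          then 2 ^ ((m+1)/x - 1) else 0)) ((m+1)/d) := by
        apply Finset.sum_congr rfl
        intro d hd
        simp only []
        rw [Nat.div_div_self (Nat.dvd_of_mem_divisors hd) (Nat.succ_ne_zero m)]
    _ = ∑ d ∈ (m+1).divisors, Nat.totient d * (if Odd d then 2 ^ ((m+1)/d - 1) else 0) :=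
        Nat.sum_div_divisors (m+1) (fun x => Nat.totient x * (if Odd x then 2 ^ ((m+1)/x - 1) else 0))
    _ = ∑ d ∈ (m+1).divisors.filter (fun d => Odd d), d.totient * 2 ^ ((m+1)/d - 1) := by
        rw [Finset.sum_filter]
        apply Finset.sum_congr rfl
        intro d _
        by_cases h : Odd d <;> simp [h]

/-! ### From necklace classes to orbits -/

set_option maxHeartbeats 1000000 in
lemma card_odd_classes_le (m : ℕ)
    [Fintype {X : Quot (necklaceRel (m+1)) // parB m X = true}]
    [Fintype (Quotient (AddAction.orbitRel (Fin (m+1)) (OddF m)))] :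
    Fintype.card {X : Quot (necklaceRel (m+1)) // parB m X = true}
      ≤ Fintype.card (Quotient (AddAction.orbitRel (Fin (m+1)) (OddF m))) := by
  have hrep : ∀ X : {X : Quot (necklaceRel (m+1)) // parB m X = true}, Odd (wt (X.1.out)) := by
    intro X
    have h := X.2
    rw [← Quot.out_eq X.1] at h
    exact (parB_mk _).mp h
  apply Fintype.card_le_of_injective
    (fun X => Quotient.mk (AddAction.orbitRel (Fin (m+1)) (OddF m)) (⟨X.1.out, hrep X⟩ : OddF m))
  intro X Y h
  have h2 : (⟨X.1.out, hrep X⟩ : OddF m) ∈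
      AddAction.orbit (Fin (m+1)) (⟨Y.1.out, hrep Y⟩ : OddF m) := Quotient.exact h
  obtain ⟨k, hk⟩ := AddAction.mem_orbit_iff.mp h2
  have hval : X.1.out = fun i => Y.1.out (i + k) := (congrArg Subtype.val hk).symm
  have hrel : necklaceRel (m+1) Y.1.out X.1.out := by
    rw [necklaceRel_iff]
    exact ⟨k.val, by rw [Fin.cast_val_eq_self k]; exact hval⟩
  have : Y.1 = X.1 := by
    rw [← Quot.out_eq X.1, ← Quot.out_eq Y.1]
    exact Quot.sound hrel
  exact Subtype.ext this.symm

end NGAux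

open NGAux in
theorem NG_path_bound (n : ℕ) (hn : 4 ≤ n) (he : Even n) :
    ∀ (u v : Quot (necklaceRel n)) (p : (NG n).Walk u v),
      p.IsPath → p.support.length ≤ BPL n := by
  obtain ⟨m, rfl⟩ : ∃ m, n = m + 1 := ⟨n - 1, by omega⟩
  intro u v p hp
  classical
  letI fQ : Fintype (Quot (necklaceRel (m+1))) := Fintype.ofFinite _
  letI fS : Fintype {X : Quot (necklaceRel (m+1)) // parB m X = true} :=
    Fintype.ofFinite {X : Quot (necklaceRel (m+1)) // parB m X = true}
  letI fO : Fintype (Quotient (AddAction.orbitRel (Fin (m+1)) (OddF m))) :=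
    Fintype.ofFinite (Quotient (AddAction.orbitRel (Fin (m+1)) (OddF m)))
  have hchain : List.Chain' (fun a b => parB m a ≠ parB m b) p.support :=
    List.IsChain.imp (fun a b hab => adj_parB m hab) p.isChain_adj_support
  have h1 := chain_length_le (parB m) p.support hchain
  have hnodup : p.support.Nodup := hp.support_nodup
  have hfn : (p.support.filter (fun v => parB m v)).Nodup := hnodup.filter _
  set M := Fintype.card {X : Quot (necklaceRel (m+1)) // parB m X = true} with hM
  have h2 : (p.support.filter (fun v => parB m v)).length ≤ M := by
    have hmem : ∀ x ∈ p.support.filter (fun v => parB m v), parB m x = true :=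
      fun x hx => by simpa using (List.mem_filter.mp hx).2
    let l' : List {X : Quot (necklaceRel (m+1)) // parB m X = true} :=
      (p.support.filter (fun v => parB m v)).pmap Subtype.mk hmem
    have hlen : l'.length = (p.support.filter (fun v => parB m v)).length :=
      List.length_pmap
    have hnd : l'.Nodup := by
      apply List.Nodup.pmap
      · intro a _ b _ hab
        exact congrArg Subtype.val hab
      · exact hfn
    rw [← hlen]
    exact hnd.length_le_card
  have horb := orbit_count m
  have hle := card_odd_classes_le m
  have hS : (∑ d ∈ (m+1).divisors.filter (fun d => Odd d), d.totient * 2 ^ ((m+1)/d))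
      = 2 * ∑ d ∈ (m+1).divisors.filter (fun d => Odd d), d.totient * 2 ^ ((m+1)/d - 1) := by
    rw [Finset.mul_sum]
    apply Finset.sum_congr rfl
    intro d hd
    have hdvd := Nat.dvd_of_mem_divisors (Finset.mem_filter.mp hd).1
    have hd0 : 0 < d := Nat.pos_of_dvd_of_pos hdvd (Nat.succ_pos m)
    have hpos : 0 < (m+1)/d := Nat.div_pos (Nat.le_of_dvd (Nat.succ_pos m) hdvd) hd0
    have hp2 : (2:ℕ) ^ ((m+1)/d) = 2 * 2 ^ ((m+1)/d - 1) := by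
      rw [← pow_succ']
      congr 1
      omega
    rw [hp2]
    ring
  have hdiv : (∑ d ∈ (m+1).divisors.filter (fun d => Odd d), d.totient * 2 ^ ((m+1)/d)) / (m+1)
      = 2 * Fintype.card (Quotient (AddAction.orbitRel (Fin (m+1)) (OddF m))) := by
    rw [hS, ← horb]
    rw [show 2 * (Fintype.card (Quotient (AddAction.orbitRel (Fin (m+1)) (OddF m))) * (m+1))
        = (2 * Fintype.card (Quotient (AddAction.orbitRel (Fin (m+1)) (OddF m)))) * (m+1)
      by ring]
    exact Nat.mul_div_cancel _ (Nat.succ_pos m)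
  show p.support.length ≤
    (∑ d ∈ (m+1).divisors.filter (fun d => Odd d), d.totient * 2 ^ ((m+1)/d)) / (m+1) + 1
  rw [hdiv]
  omega
end

section
/- In the binary necklace graph NG(4), there is no Hamiltonian path; more precisely, the longest path in NG(4) contains exactly 5 of its 6 vertices. -/
namespace NGaux
open Function

lemma pow4 : (finRotate 4)^4 = 1 := by decide

lemma necklaceRel_iff (f g : Fin 4 → Bool) :
    necklaceRel 4 f g ↔ ∃ k : Fin 4, g = f ∘ ⇑((finRotate 4) ^ (k : ℕ)) := by
  constructor
  · rintro ⟨k, rfl⟩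
    exact ⟨⟨k % 4, Nat.mod_lt _ (by norm_num)⟩, by rw [← pow_eq_pow_mod k pow4]⟩
  · rintro ⟨k, rfl⟩; exact ⟨k, rfl⟩

instance decRel : DecidableRel (necklaceRel 4) := fun f g =>
  decidable_of_iff _ (necklaceRel_iff f g).symm

lemma rel_equiv : Equivalence (necklaceRel 4) := by
  constructor
  · intro f; exact ⟨0, by simp⟩
  · rintro f g ⟨k, rfl⟩
    refine ⟨3 * k, ?_⟩
    funext x
    simp only [comp_apply, ← Equiv.Perm.mul_apply, ← pow_add]
    have : k + 3 * k = 4 * k := by ring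
    rw [this, pow_mul, pow4, one_pow, Equiv.Perm.one_apply]
  · rintro f g h ⟨k, rfl⟩ ⟨j, rfl⟩
    refine ⟨k + j, ?_⟩
    funext x
    simp [comp_apply, ← Equiv.Perm.mul_apply, ← pow_add]

instance s4 : Setoid (Fin 4 → Bool) := ⟨necklaceRel 4, rel_equiv⟩

instance : DecidableEq (Quot (necklaceRel 4)) :=
  @Quotient.decidableEq _ s4 decRel

instance : Fintype (Quot (necklaceRel 4)) :=
  Fintype.ofSurjective (Quot.mk _) (fun q => Quot.exists_rep q)

instance (f g : Fin 4 → Bool) : Decidable (dBArc 4 f g) := by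
  unfold dBArc; infer_instance

instance : DecidableRel (NG 4).Adj := fun X Y =>
  decidable_of_iff (X ≠ Y ∧ ∃ f g : Fin 4 → Bool,
    Quot.mk _ f = X ∧ Quot.mk _ g = Y ∧ (dBArc 4 f g ∨ dBArc 4 g f)) Iff.rfl

def E : Fin 6 → (Fin 4 → Bool) :=
  ![![false,false,false,false], ![false,false,false,true], ![false,false,true,true],
    ![false,true,false,true], ![false,true,true,true], ![true,true,true,true]]

def C (i : Fin 6) : Quot (necklaceRel 4) := Quot.mk _ (E i)

lemma C_inj : ∀ i j : Fin 6, C i = C j → i = j := by decide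

lemma C_surj : ∀ X : Quot (necklaceRel 4), ∃ i, X = C i := by
  intro X
  obtain ⟨f, rfl⟩ := Quot.exists_rep X
  revert f; decide

def M : Fin 6 → Fin 6 → Bool :=
  ![![false,true,false,false,false,false],
    ![true,false,true,true,false,false],
    ![false,true,false,false,true,false],
    ![false,true,false,false,true,false],
    ![false,false,true,true,false,true],
    ![false,false,false,false,true,false]]

lemma adj_iff : ∀ i j : Fin 6, (NG 4).Adj (C i) (C j) ↔ M i j := by decide

end NGaux
namespace NGaux

set_option synthInstance.maxSize 2000 in
lemma no6 : ∀ i0 i1 i2 i3 i4 i5 : Fin 6,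
    (M i0 i1 ∧ M i1 i2 ∧ M i2 i3 ∧ M i3 i4 ∧ M i4 i5) →
    ¬ (i0 ≠ i1 ∧ i0 ≠ i2 ∧ i0 ≠ i3 ∧ i0 ≠ i4 ∧ i0 ≠ i5 ∧
     i1 ≠ i2 ∧ i1 ≠ i3 ∧ i1 ≠ i4 ∧ i1 ≠ i5 ∧
     i2 ≠ i3 ∧ i2 ≠ i4 ∧ i2 ≠ i5 ∧ i3 ≠ i4 ∧ i3 ≠ i5 ∧ i4 ≠ i5) := by
  decide

lemma key (l : List (Quot (necklaceRel 4))) (hc : l.Chain' (NG 4).Adj)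
    (hn : l.Nodup) : l.length ≤ 5 := by
  by_contra h
  push_neg at h
  match l, h with
  | x0 :: x1 :: x2 :: x3 :: x4 :: x5 :: rest, _ =>
    simp only [List.Chain', List.isChain_cons_cons, List.nodup_cons, List.mem_cons] at hc hn
    obtain ⟨i0, rfl⟩ := C_surj x0
    obtain ⟨i1, rfl⟩ := C_surj x1
    obtain ⟨i2, rfl⟩ := C_surj x2
    obtain ⟨i3, rfl⟩ := C_surj x3
    obtain ⟨i4, rfl⟩ := C_surj x4
    obtain ⟨i5, rfl⟩ := C_surj x5
    refine no6 i0 i1 i2 i3 i4 i5 ⟨?_, ?_, ?_, ?_, ?_⟩ ?_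
    · exact (adj_iff i0 i1).1 hc.1
    · exact (adj_iff i1 i2).1 hc.2.1
    · exact (adj_iff i2 i3).1 hc.2.2.1
    · exact (adj_iff i3 i4).1 hc.2.2.2.1
    · exact (adj_iff i4 i5).1 hc.2.2.2.2.1
    · refine ⟨?_,?_,?_,?_,?_,?_,?_,?_,?_,?_,?_,?_,?_,?_,?_⟩ <;>
        (intro he; subst he) <;> tauto

end NGaux

open NGaux in
theorem NG4_no_hamiltonian_path :
    (¬ ∃ (u v : Quot (necklaceRel 4)) (p : (NG 4).Walk u v),
        p.IsPath ∧ ∀ X : Quot (necklaceRel 4), X ∈ p.support) ∧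
    (∀ (u v : Quot (necklaceRel 4)) (p : (NG 4).Walk u v),
        p.IsPath → p.support.length ≤ 5) ∧
    (∃ (u v : Quot (necklaceRel 4)) (p : (NG 4).Walk u v),
        p.IsPath ∧ p.support.length = 5) := by
  have part2 : ∀ (u v : Quot (necklaceRel 4)) (p : (NG 4).Walk u v),
      p.IsPath → p.support.length ≤ 5 := by
    intro u v p hp
    exact key _ p.isChain_adj_support hp.support_nodup
  refine ⟨?_, part2, ?_⟩
  · rintro ⟨u, v, p, hp, hall⟩
    have h6 : ([C 0, C 1, C 2, C 3, C 4, C 5] : List _).Nodup := by decide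
    have hsub : ([C 0, C 1, C 2, C 3, C 4, C 5] : List _) ⊆ p.support := by
      intro x _; exact hall x
    have h1 : (6:ℕ) ≤ p.support.length := by
      simpa using (h6.subperm hsub).length_le
    have h2 := part2 u v p hp
    omega
  · have a01 : (NG 4).Adj (C 0) (C 1) := (adj_iff 0 1).2 (by decide)
    have a12 : (NG 4).Adj (C 1) (C 2) := (adj_iff 1 2).2 (by decide)
    have a24 : (NG 4).Adj (C 2) (C 4) := (adj_iff 2 4).2 (by decide)
    have a45 : (NG 4).Adj (C 4) (C 5) := (adj_iff 4 5).2 (by decide)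
    refine ⟨C 0, C 5, .cons a01 (.cons a12 (.cons a24 (.cons a45 .nil))), ?_, by simp⟩
    rw [SimpleGraph.Walk.isPath_def]
    simp only [SimpleGraph.Walk.support_cons, SimpleGraph.Walk.support_nil]
    decide
end
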